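/- arXiv:2212.06020 — 8 statements merged into one kernel-verified Lean document; each statement's English description precedes it below -/
import Mathlib

section
/- Let G be a group acting sharply 2-transitively on a set X. If u and v are two distinct involutions of G, then there is no point x ∈ X with u·x = x and v·x = x. -/
/-- An involution of a group is an element of order 2. -/
def IsInvolution {G : Type*} [Monoid G] (g : G) : Prop := orderOf g = 2

/-- A group `G` acts sharply 2-transitively on `X` if `X` has at least two elements and
any pair of distinct points of `X` is sent to any other such pair by a unique element of `G`. -/
def SharplyTwoTransitive (G X : Type*) [Group G] [MulAction G X] : Prop :=
  Nontrivial X ∧ ∀ x₁ x₂ y₁ y₂ : X, x₁ ≠ x₂ → y₁ ≠ y₂ →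
    ∃! g : G, g • x₁ = y₁ ∧ g • x₂ = y₂

/-- Two distinct involutions of a sharply 2-transitive group cannot have a common
fixed point. -/
theorem stmt_3 {G X : Type*} [Group G] [MulAction G X]
    (h2t : SharplyTwoTransitive G X) (u v : G)
    (hu : IsInvolution u) (hv : IsInvolution v) (huv : u ≠ v) :
    ¬ ∃ x : X, u • x = x ∧ v • x = x := by
  rintro ⟨x, hux, hvx⟩
  obtain ⟨hnt, huniq⟩ := h2t
  have hu1 : u ≠ 1 := by
    intro h; rw [h] at hu; simp [IsInvolution, orderOf_one] at hu
  have hv1 : v ≠ 1 := by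
    intro h; rw [h] at hv; simp [IsInvolution, orderOf_one] at hv
  have hu2 : ∀ z : X, u • u • z = z := by
    intro z
    have h : u ^ 2 = 1 := by rw [← hu]; exact pow_orderOf_eq_one u
    rw [smul_smul, ← sq, h, one_smul]
  have hv2 : ∀ z : X, v • v • z = z := by
    intro z
    have h : v ^ 2 = 1 := by rw [← hv]; exact pow_orderOf_eq_one v
    rw [smul_smul, ← sq, h, one_smul]
  -- x is the unique fixed point of u (resp. v)
  have hufix : ∀ w : X, u • w = w → w = x := by
    intro w hw
    by_contra hwx
    exact hu1 ((huniq x w x w (fun h => hwx h.symm) (fun h => hwx h.symm)).unique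
      ⟨hux, hw⟩ ⟨one_smul G x, one_smul G w⟩)
  have hvfix : ∀ w : X, v • w = w → w = x := by
    intro w hw
    by_contra hwx
    exact hv1 ((huniq x w x w (fun h => hwx h.symm) (fun h => hwx h.symm)).unique
      ⟨hvx, hw⟩ ⟨one_smul G x, one_smul G w⟩)
  obtain ⟨y, hyx⟩ := exists_ne x
  have hya : y ≠ u • y := fun h => hyx (hufix y h.symm)
  have hyb : y ≠ v • y := fun h => hyx (hvfix y h.symm)
  have hxa : x ≠ u • y := by
    intro h
    exact hyx (by calc y = u • u • y := (hu2 y).symm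
                  _ = u • x := by rw [← h]
                  _ = x := hux)
  have hab : u • y ≠ v • y := by
    intro h
    exact huv ((huniq x y x (u • y) (Ne.symm hyx) hxa).unique
      ⟨hux, rfl⟩ ⟨hvx, h.symm⟩)
  -- get g fixing y, sending u•y to v•y
  obtain ⟨g, ⟨hgy, hga⟩, -⟩ := huniq y (u • y) y (v • y) hya hyb
  -- both v and g*u*g⁻¹ swap y and v•y
  have hginv_y : g⁻¹ • y = y := inv_smul_eq_iff.mpr hgy.symm
  have hginv_b : g⁻¹ • (v • y) = u • y := inv_smul_eq_iff.mpr hga.symm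
  have key : g * u * g⁻¹ = v := by
    refine (huniq y (v • y) (v • y) y hyb (Ne.symm hyb)).unique ?_ ⟨rfl, hv2 y⟩
    constructor
    · rw [mul_smul, mul_smul, hginv_y, hga]
    · rw [mul_smul, mul_smul, hginv_b, hu2, hgy]
  -- hence u fixes g⁻¹ • x, so g⁻¹ • x = x, so g fixes x and y, so g = 1
  have hufixg : u • (g⁻¹ • x) = g⁻¹ • x := by
    have : (g * u * g⁻¹) • x = x := by rw [key, hvx]
    rw [mul_smul, mul_smul] at this
    calc u • g⁻¹ • x = g⁻¹ • (g • u • g⁻¹ • x) := by rw [inv_smul_smul]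
    _ = g⁻¹ • x := by rw [this]
  have hgx : g • x = x := by
    have h1 : g⁻¹ • x = x := hufix _ hufixg
    exact (inv_smul_eq_iff.mp h1).symm
  have hg1 : g = 1 := (huniq x y x y (Ne.symm hyx) (Ne.symm hyx)).unique
    ⟨hgx, hgy⟩ ⟨one_smul G x, one_smul G y⟩
  apply huv
  rw [← key, hg1, one_mul, inv_one, mul_one]
end

section
/- Let G be a group acting sharply 2-transitively on a set X. If u and v are two distinct involutions of G, then the element uv has no fixed point in X. -/
/-- The product of two distinct involutions of a sharply 2-transitive group cannot fix
a point. -/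
theorem stmt_4 {G X : Type*} [Group G] [MulAction G X]
    (h2t : SharplyTwoTransitive G X) (u v : G)
    (hu : IsInvolution u) (hv : IsInvolution v) (huv : u ≠ v) :
    ∀ x : X, (u * v) • x ≠ x := by
  obtain ⟨hX, hact⟩ := h2t
  have hu2 : u * u = 1 := by
    have := pow_orderOf_eq_one u; rw [hu, pow_two] at this; exact this
  have hv2 : v * v = 1 := by
    have := pow_orderOf_eq_one v; rw [hv, pow_two] at this; exact this
  have hune : u ≠ 1 := by
    intro h; rw [IsInvolution, h, orderOf_one] at hu; simp at hu
  have hvne : v ≠ 1 := by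
    intro h; rw [IsInvolution, h, orderOf_one] at hv; simp at hv
  -- an element fixing two distinct points is 1
  have fix2 : ∀ (g : G) (a b : X), a ≠ b → g • a = a → g • b = b → g = 1 := by
    intro g a b hab hga hgb
    have h := hact a b a b hab hab
    exact (h.unique ⟨hga, hgb⟩ ⟨one_smul G a, one_smul G b⟩)
  intro x hx
  -- v • x = u • x
  have hyx : v • x = u • x := by
    have : u • ((u * v) • x) = u • x := by rw [hx]
    rwa [← mul_smul, ← mul_assoc, hu2, one_mul] at this
  set y := u • x with hy
  have huy : u • y = x := by rw [hy, ← mul_smul, hu2, one_smul]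
  have hvy : v • y = x := by rw [← hyx, ← mul_smul, hv2, one_smul]
  by_cases hxy : x = y
  · -- u and v both fix x
    have hux : u • x = x := hxy.symm
    have hvx : v • x = x := hyx.trans hxy.symm
    obtain ⟨z, hz⟩ := exists_ne x
    set a := u • z with ha
    set b := v • z with hb
    have huz2 : u • a = z := by rw [ha, ← mul_smul, hu2, one_smul]
    have hvz2 : v • b = z := by rw [hb, ← mul_smul, hv2, one_smul]
    have haz : a ≠ z := fun h => hune (fix2 u x z (Ne.symm hz) hux h)
    have hbz : b ≠ z := fun h => hvne (fix2 v x z (Ne.symm hz) hvx h)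
    have hax : a ≠ x := by
      intro h
      have : u • z = u • x := by rw [← ha, h, hux]
      exact hz (smul_left_cancel u this)
    have hbx : b ≠ x := by
      intro h
      have : v • z = v • x := by rw [← hb, h, hvx]
      exact hz (smul_left_cancel v this)
    by_cases hab : a = b
    · -- u and v both send (x, z) to (x, a)
      have h := hact x z x a (Ne.symm hz) (Ne.symm hax)
      exact huv (h.unique ⟨hux, rfl⟩ ⟨hvx, by rw [hab]⟩)
    · -- take g fixing z with g • a = b; conjugation gives u = v
      obtain ⟨g, ⟨hgz, hga⟩, -⟩ := hact z a z b (Ne.symm haz) (Ne.symm hbz)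
      have hginv : g⁻¹ • z = z := by rw [inv_smul_eq_iff]; exact hgz.symm
      have hwz : (g * u * g⁻¹) • z = b := by
        rw [mul_smul, mul_smul, hginv, ← ha, hga]
      have hwb : (g * u * g⁻¹) • b = z := by
        rw [mul_smul, mul_smul, ← hga, inv_smul_smul, huz2, hgz]
      -- both g*u*g⁻¹ and v send (z, b) to (b, z)
      have hweq : g * u * g⁻¹ = v := by
        have h := hact z b b z (Ne.symm hbz) hbz
        exact h.unique ⟨hwz, hwb⟩ ⟨rfl, hvz2⟩
      -- v fixes g • x, hence g • x = x
      have hvg : v • (g • x) = g • x := by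
        rw [← hweq, mul_smul, mul_smul, inv_smul_smul, hux]
      have hgxx : g • x = x := by
        by_contra hne
        exact hvne (fix2 v (g • x) x hne hvg hvx)
      have hg1 : g = 1 := fix2 g x z (Ne.symm hz) hgxx hgz
      rw [hg1, one_mul, inv_one, mul_one] at hweq
      exact huv hweq
  · -- u and v both swap x and y
    have h := hact x y y x hxy (Ne.symm hxy)
    exact huv (h.unique ⟨rfl, huy⟩ ⟨hyx.symm ▸ rfl, hvy⟩)
end

section
/- Let G be a group acting sharply 2-transitively on a set X with at least 4 elements. If the action is not of characteristic 2 (i.e., some involution of G has a fixed point in X), then there exist four elements of G that are pairwise non-conjugate; in particular G has at least four conjugacy classes. -/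
/-- If `G` acts sharply 2-transitively on a set `X` with at least 4 elements and the action
is not of characteristic 2 (some involution has a fixed point), then `G` contains four
pairwise non-conjugate elements; in particular `G` has at least four conjugacy classes. -/
theorem stmt_5 {G X : Type*} [Group G] [MulAction G X]
    (h2t : SharplyTwoTransitive G X)
    (hX : ∃ a b c d : X, a ≠ b ∧ a ≠ c ∧ a ≠ d ∧ b ≠ c ∧ b ≠ d ∧ c ≠ d)
    (hchar : ∃ (u : G) (x : X), IsInvolution u ∧ u • x = x) :
    (∃ g₁ g₂ g₃ g₄ : G, ¬ IsConj g₁ g₂ ∧ ¬ IsConj g₁ g₃ ∧ ¬ IsConj g₁ g₄ ∧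
      ¬ IsConj g₂ g₃ ∧ ¬ IsConj g₂ g₄ ∧ ¬ IsConj g₃ g₄) ∧
    4 ≤ Cardinal.mk (ConjClasses G) := by
  obtain ⟨hnt, htr⟩ := h2t
  obtain ⟨u, x0, hu, hux⟩ := hchar
  -- basic facts about u
  have hu' : orderOf u = 2 := hu
  have uu : u * u = 1 := by
    have h := pow_orderOf_eq_one u
    rw [hu', pow_two] at h
    exact h
  have une : u ≠ 1 := by
    intro h
    rw [h, orderOf_one] at hu'
    omega
  -- an element fixing two distinct points is 1
  have two_pt : ∀ (g : G) (p q : X), p ≠ q → g • p = p → g • q = q → g = 1 := by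
    intro g p q hpq hp hq
    obtain ⟨g', _, huniq⟩ := htr p q p q hpq hpq
    have h1 := huniq g ⟨hp, hq⟩
    have h2 := huniq 1 ⟨one_smul _ _, one_smul _ _⟩
    rw [h1, h2]
  -- every involution has a fixed point
  have invol_fix : ∀ v : G, v * v = 1 → v ≠ 1 → ∃ p : X, v • p = p := by
    intro v hvv hvne
    have hmoves : ∃ a : X, v • a ≠ a := by
      by_contra hall
      push_neg at hall
      obtain ⟨p, q, hpq⟩ := exists_pair_ne X
      exact hvne (two_pt v p q hpq (hall p) (hall q))
    obtain ⟨a, hva⟩ := hmoves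
    have humoves : ∃ b : X, u • b ≠ b := by
      by_contra hall
      push_neg at hall
      obtain ⟨p, q, hpq⟩ := exists_pair_ne X
      exact une (two_pt u p q hpq (hall p) (hall q))
    obtain ⟨b, hub⟩ := humoves
    obtain ⟨g, ⟨hga, hgva⟩, _⟩ := htr a (v • a) b (u • b) (Ne.symm hva) (Ne.symm hub)
    -- g • a = b, g • (v•a) = u•b ; show g * v * g⁻¹ = u
    have hginvb : g⁻¹ • b = a := by rw [← hga, inv_smul_smul]
    have hginvub : g⁻¹ • (u • b) = v • a := by rw [← hgva, inv_smul_smul]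
    have key : g * v * g⁻¹ = u := by
      obtain ⟨e, _, heuniq⟩ := htr b (u • b) (u • b) b (Ne.symm hub) hub
      have h1 : (g * v * g⁻¹) • b = u • b := by
        rw [mul_smul, mul_smul, hginvb, hgva]
      have h2 : (g * v * g⁻¹) • (u • b) = b := by
        rw [mul_smul, mul_smul, hginvub, smul_smul v v, hvv, one_smul, hga]
      have h3 : u • (u • b) = b := by rw [smul_smul, uu, one_smul]
      have e1 := heuniq (g * v * g⁻¹) ⟨h1, h2⟩
      have e2 := heuniq u ⟨rfl, h3⟩
      rw [e1, e2]
    refine ⟨g⁻¹ • x0, ?_⟩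
    have : v = g⁻¹ * u * g := by
      rw [← key]
      group
    rw [this, mul_smul, mul_smul, smul_inv_smul, hux]
  -- picking points: some y ≠ x0 and two further points p q distinct from each other and from x0, y
  have pts : ∃ y p q : X, y ≠ x0 ∧ p ≠ q ∧ p ≠ x0 ∧ p ≠ y ∧ q ≠ x0 ∧ q ≠ y := by
    obtain ⟨a, b, c, d, hab, hac, had, hbc, hbd, hcd⟩ := hX
    by_cases h1 : a = x0
    · subst h1
      exact ⟨b, c, d, Ne.symm hab, hcd, Ne.symm hac, Ne.symm hbc, Ne.symm had, Ne.symm hbd⟩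
    · by_cases h2 : b = x0
      · subst h2
        exact ⟨a, c, d, h1, hcd, Ne.symm hbc, Ne.symm hac, Ne.symm hbd, Ne.symm had⟩
      · by_cases h3 : c = x0
        · subst h3
          exact ⟨a, b, d, h1, hbd, hbc, Ne.symm hab, Ne.symm hcd, Ne.symm had⟩
        · exact ⟨a, b, c, h1, hbc, h2, Ne.symm hab, h3, Ne.symm hac⟩
  obtain ⟨y, p, q, hy, hpq, hp0, hpy, hq0, hqy⟩ := pts
  -- existence of a non-involution with a fixed point
  have hg3 : ∃ c : G, c ≠ 1 ∧ (∃ pt : X, c • pt = pt) ∧ c * c ≠ 1 := by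
    by_contra hbadd
    push_neg at hbadd
    have bad : ∀ c : G, (∃ pt : X, c • pt = pt) → c * c = 1 := by
      intro c hc
      by_cases h1 : c = 1
      · rw [h1, one_mul]
      · exact hbadd c h1 hc
    -- w : the swap of x0 and y
    obtain ⟨w, ⟨hw0, hw1⟩, _⟩ := htr x0 y y x0 (Ne.symm hy) hy
    have ww : w * w = 1 :=
      two_pt _ x0 y (Ne.symm hy) (by rw [mul_smul, hw0, hw1]) (by rw [mul_smul, hw1, hw0])
    have wne : w ≠ 1 := by
      intro h
      rw [h, one_smul] at hw0
      exact hy hw0.symm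
    obtain ⟨m, hwm⟩ := invol_fix w ww wne
    -- key claim : for a ≠ 1 fixing x0, w • (a • y) = m
    have key : ∀ a : G, a • x0 = x0 → a ≠ 1 → w • (a • y) = m := by
      intro a ha0 ha1
      set c := w * a * w with hcdef
      have hcy : c • y = y := by
        rw [hcdef, mul_smul, mul_smul, hw1, ha0, hw0]
      have hcne : c ≠ 1 := by
        intro h
        rw [hcdef] at h
        apply ha1
        calc a = (w * w) * a * (w * w) := by rw [ww, one_mul, mul_one]
        _ = w * (w * a * w) * w := by group
        _ = w * 1 * w := by rw [h]
        _ = 1 := by rw [mul_one, ww]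
      have hcc : c * c = 1 := bad c ⟨y, hcy⟩
      set P := w • (a • y) with hPdef
      have hc0 : c • x0 = P := by
        rw [hcdef, mul_smul, mul_smul, hw0]
      have hPne0 : P ≠ x0 := by
        intro h
        apply ha1
        have hay : a • y = y := by
          apply MulAction.injective w
          show w • (a • y) = w • y
          rw [← hPdef, h, hw1]
        exact two_pt a x0 y (Ne.symm hy) ha0 hay
      have hPne1 : P ≠ y := by
        intro h
        have : c • x0 = c • y := by rw [hc0, h, hcy]
        exact (Ne.symm hy) (MulAction.injective c this)
      have hcP : c • P = x0 := by
        rw [← hc0, smul_smul, hcc, one_smul]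
      -- d : the element sending (x0, y) to (x0, P)
      obtain ⟨d, ⟨hd0, hd1⟩, _⟩ := htr x0 y x0 P (Ne.symm hy) (Ne.symm hPne0)
      have hdd : d * d = 1 := bad d ⟨x0, hd0⟩
      have hdinv0 : d⁻¹ • x0 = x0 := by rw [inv_smul_eq_iff, hd0]
      have hdinvP : d⁻¹ • P = y := by rw [inv_smul_eq_iff, hd1]
      set f := d * w * d⁻¹ with hfdef
      have hf0 : f • x0 = P := by
        rw [hfdef, mul_smul, mul_smul, hdinv0, hw0, hd1]
      have hfP : f • P = x0 := by
        rw [hfdef, mul_smul, mul_smul, hdinvP, hw1, hd0]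
      have hcf : c = f := by
        obtain ⟨e, _, heuniq⟩ := htr x0 P P x0 (Ne.symm hPne0) hPne0
        have e1 := heuniq c ⟨hc0, hcP⟩
        have e2 := heuniq f ⟨hf0, hfP⟩
        rw [e1, e2]
      have hfm : f • (d • m) = d • m := by
        rw [hfdef, mul_smul, mul_smul, inv_smul_smul, hwm]
      have hym : y = d • m := by
        by_contra hne
        exact hcne (two_pt c y (d • m) hne hcy (by rw [hcf]; exact hfm))
      -- P = d • y = d • (d • m) = m
      show P = m
      rw [← hd1, hym, smul_smul, hdd, one_smul]
    -- apply key to two different elements of the stabilizer of x0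
    obtain ⟨a, ⟨ha0, ha1⟩, _⟩ := htr x0 y x0 p (Ne.symm hy) (Ne.symm hp0)
    obtain ⟨b, ⟨hb0, hb1⟩, _⟩ := htr x0 y x0 q (Ne.symm hy) (Ne.symm hq0)
    have hane : a ≠ 1 := by
      intro h
      rw [h, one_smul] at ha1
      exact hpy ha1.symm
    have hbne : b ≠ 1 := by
      intro h
      rw [h, one_smul] at hb1
      exact hqy hb1.symm
    have k1 := key a ha0 hane
    have k2 := key b hb0 hbne
    rw [ha1] at k1
    rw [hb1] at k2
    exact hpq (MulAction.injective w (show w • p = w • q by rw [k1, k2]))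
  obtain ⟨c, hcne, ⟨pc, hpc⟩, hcc⟩ := hg3
  -- the fixed-point-free element h = u * t where t is an involution fixing y
  obtain ⟨s, ⟨hs0, hs1⟩, _⟩ := htr x0 y y x0 (Ne.symm hy) hy
  have ss : s * s = 1 :=
    two_pt _ x0 y (Ne.symm hy) (by rw [mul_smul, hs0, hs1]) (by rw [mul_smul, hs1, hs0])
  have hsinv : s⁻¹ = s := inv_eq_of_mul_eq_one_right ss
  set t := s * u * s⁻¹ with htdef
  have hty : t • y = y := by
    have hsinv1 : s⁻¹ • y = x0 := by rw [inv_smul_eq_iff, hs0]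
    rw [htdef, mul_smul, mul_smul, hsinv1, hux, hs0]
  have htne1 : t ≠ 1 := by
    intro h
    rw [htdef] at h
    apply une
    calc u = s⁻¹ * (s * u * s⁻¹) * s := by group
    _ = s⁻¹ * 1 * s := by rw [h]
    _ = 1 := by rw [mul_one, inv_mul_cancel]
  have tt : t * t = 1 := by
    calc t * t = s * (u * u) * s⁻¹ := by rw [htdef]; group
    _ = 1 := by rw [uu, mul_one, mul_inv_cancel]
  have htu : t ≠ u := by
    intro h
    apply une
    have huy : u • y = y := by rw [← h]; exact hty
    exact two_pt u x0 y (Ne.symm hy) hux huy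
  have uinv : u⁻¹ = u := inv_eq_of_mul_eq_one_right uu
  set h := u * t with hhdef
  have hfpf : ∀ z : X, h • z ≠ z := by
    intro z hz
    have htz : t • z = u • z := by
      have h1 : u • (t • z) = z := by rw [← mul_smul]; exact hz
      calc t • z = u • (u • (t • z)) := by rw [smul_smul u u, uu, one_smul]
      _ = u • z := by rw [h1]
    by_cases hzz : t • z = z
    · -- z is fixed by t, so z = y, and then u fixes z and x0
      have hzy : z = y := by
        by_contra hne
        exact htne1 (two_pt t z y hne hzz hty)
      have huz : u • z = z := by rw [← htz, hzz]
      apply une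
      apply two_pt u x0 z (by rw [hzy]; exact Ne.symm hy) hux huz
    · -- u and t both swap z and t • z, hence u = t
      have hut : u = t := by
        obtain ⟨e, _, heuniq⟩ := htr z (t • z) (t • z) z (Ne.symm hzz) hzz
        have h1 : u • z = t • z := htz.symm
        have h2 : u • (t • z) = z := by
          rw [htz, smul_smul, uu, one_smul]
        have h3 : t • (t • z) = z := by rw [smul_smul, tt, one_smul]
        have e1 := heuniq u ⟨h1, h2⟩
        have e2 := heuniq t ⟨rfl, h3⟩
        rw [e1, e2]
      exact htu hut.symm
  have hne1 : h ≠ 1 := by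
    intro hh
    obtain ⟨z, _⟩ := exists_pair_ne X
    exact hfpf z (by rw [hh, one_smul])
  have hhh : h * h ≠ 1 := by
    intro hh
    obtain ⟨z, hz⟩ := invol_fix h hh hne1
    exact hfpf z hz
  -- conjugation preserves having a fixed point
  have conj_fix : ∀ g g' : G, IsConj g g' → (∃ pt : X, g • pt = pt) → ∃ pt : X, g' • pt = pt := by
    intro g g' hconj ⟨pt, hpt⟩
    obtain ⟨k, hk⟩ := hconj
    have hk' : (k : G) * g = g' * (k : G) := hk
    refine ⟨(k : G) • pt, ?_⟩
    rw [smul_smul, ← hk', mul_smul, hpt]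
  -- non-conjugacy facts
  have conj_one : ∀ g : G, IsConj 1 g → g = 1 := by
    intro g hconj
    obtain ⟨k, hk⟩ := hconj
    have hk' : (k : G) * 1 = g * (k : G) := hk
    rw [mul_one] at hk'
    have h1 : (1 : G) * (k : G) = g * (k : G) := by rw [one_mul]; exact hk'
    exact (mul_right_cancel h1).symm
  have nc12 : ¬ IsConj (1 : G) u := fun hc => une (conj_one u hc)
  have nc13 : ¬ IsConj (1 : G) c := fun hc => hcne (conj_one c hc)
  have nc14 : ¬ IsConj (1 : G) h := fun hc => hne1 (conj_one h hc)
  have nc23 : ¬ IsConj u c := by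
    intro hconj
    obtain ⟨k, hk⟩ := hconj
    have hk' : (k : G) * u = c * (k : G) := hk
    apply hcc
    have hcexp : c = (k : G) * u * (k : G)⁻¹ := by
      rw [hk', mul_inv_cancel_right]
    calc c * c = (k : G) * (u * u) * (k : G)⁻¹ := by rw [hcexp]; group
    _ = 1 := by rw [uu, mul_one, mul_inv_cancel]
  have nc24 : ¬ IsConj u h := by
    intro hconj
    obtain ⟨z, hz⟩ := conj_fix u h hconj ⟨x0, hux⟩
    exact hfpf z hz
  have nc34 : ¬ IsConj c h := by
    intro hconj
    obtain ⟨z, hz⟩ := conj_fix c h hconj ⟨pc, hpc⟩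
    exact hfpf z hz
  refine ⟨⟨1, u, c, h, nc12, nc13, nc14, nc23, nc24, nc34⟩, ?_⟩
  -- cardinality
  set F : ULift.{_} (Fin 4) → ConjClasses G := fun i =>
    match i.down with
    | 0 => ConjClasses.mk 1
    | 1 => ConjClasses.mk u
    | 2 => ConjClasses.mk c
    | 3 => ConjClasses.mk h
    with hF
  have hinj : Function.Injective F := by
    intro i j hij
    have sym : ∀ {a b : G}, ¬ IsConj a b → ¬ IsConj b a := fun hnc hc => hnc hc.symm
    obtain ⟨i⟩ := i
    obtain ⟨j⟩ := j
    fin_cases i <;> fin_cases j <;>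
      simp only [hF, ConjClasses.mk_eq_mk_iff_isConj] at hij ⊢ <;>
      first
      | rfl
      | exact absurd hij nc12
      | exact absurd hij nc13
      | exact absurd hij nc14
      | exact absurd hij nc23
      | exact absurd hij nc24
      | exact absurd hij nc34
      | exact absurd hij (sym nc12)
      | exact absurd hij (sym nc13)
      | exact absurd hij (sym nc14)
      | exact absurd hij (sym nc23)
      | exact absurd hij (sym nc24)
      | exact absurd hij (sym nc34)
  have hle := Cardinal.mk_le_of_injective hinj
  simpa using hle
end

section
/- Let G be a group of order greater than 2 acting sharply 2-transitively on a set X. Then there exist three elements of G that are pairwise non-conjugate; in particular G has at least three conjugacy classes. -/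
/-- If a group `G` of order greater than 2 acts sharply 2-transitively on a set `X`, then `G`
contains three pairwise non-conjugate elements; in particular `G` has at least three
conjugacy classes. -/
theorem stmt_6 {G X : Type*} [Group G] [MulAction G X]
    (h2t : SharplyTwoTransitive G X) (hG : 2 < Cardinal.mk G) :
    (∃ g₁ g₂ g₃ : G, ¬ IsConj g₁ g₂ ∧ ¬ IsConj g₁ g₃ ∧ ¬ IsConj g₂ g₃) ∧
    3 ≤ Cardinal.mk (ConjClasses G) := by
  classical
  obtain ⟨hX, huniq⟩ := h2t
  obtain ⟨x, y, hxy⟩ := hX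
  -- key uniqueness: an element of G is determined by where it sends two distinct points
  have key : ∀ (a b : X), a ≠ b → ∀ g h : G, g • a = h • a → g • b = h • b → g = h := by
    intro a b hab g h h1 h2
    obtain ⟨k, -, hk⟩ := huniq a b (g • a) (g • b) hab
      (fun e => hab (MulAction.injective g e))
    have hg := hk g ⟨rfl, rfl⟩
    have hh := hk h ⟨h1.symm, h2.symm⟩
    rw [hg, hh]
  -- there is a third point
  have hz : ∃ z : X, z ≠ x ∧ z ≠ y := by
    by_contra hc
    push_neg at hc
    have hall : ∀ z : X, z = x ∨ z = y := by
      intro z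
      by_cases h1 : z = x
      · exact Or.inl h1
      · exact Or.inr (hc z h1)
    have hinj : Function.Injective (fun g : G => (g • x = x : Prop)) := by
      intro g h heq
      simp only [eq_iff_iff] at heq
      by_cases hgx : g • x = x
      · have hhx : h • x = x := heq.mp hgx
        have hgy : g • y = y := by
          rcases hall (g • y) with h1 | h1
          · exact absurd (h1.trans hgx.symm) (fun e => hxy (MulAction.injective g e).symm)
          · exact h1
        have hhy : h • y = y := by
          rcases hall (h • y) with h1 | h1
          · exact absurd (h1.trans hhx.symm) (fun e => hxy (MulAction.injective h e).symm)
          · exact h1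
        exact key x y hxy g h (hgx.trans hhx.symm) (hgy.trans hhy.symm)
      · have hhx : ¬ h • x = x := fun e => hgx (heq.mpr e)
        have hgx' : g • x = y := (hall (g • x)).resolve_left hgx
        have hhx' : h • x = y := (hall (h • x)).resolve_left hhx
        have hgy : g • y = x := by
          rcases hall (g • y) with h1 | h1
          · exact h1
          · exact absurd (h1.trans hgx'.symm) (fun e => hxy (MulAction.injective g e).symm)
        have hhy : h • y = x := by
          rcases hall (h • y) with h1 | h1
          · exact h1
          · exact absurd (h1.trans hhx'.symm) (fun e => hxy (MulAction.injective h e).symm)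
        exact key x y hxy g h (hgx'.trans hhx'.symm) (hgy.trans hhy.symm)
    have hle : Cardinal.lift.{0} (Cardinal.mk G) ≤ Cardinal.lift.{u_1} (Cardinal.mk Prop) :=
      Cardinal.lift_mk_le'.mpr ⟨⟨_, hinj⟩⟩
    rw [Cardinal.mk_Prop, Cardinal.lift_two] at hle
    have : Cardinal.mk G ≤ 2 := by
      have := hle.trans_eq (by simp : (2 : Cardinal.{max u_1 0}) = Cardinal.lift.{0} 2)
      exact Cardinal.lift_le.mp this
    exact absurd this (not_le.mpr hG)
  obtain ⟨z, hzx, hzy⟩ := hz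
  -- the involution t swapping x and y
  obtain ⟨t, ⟨htx, hty⟩, -⟩ := huniq x y y x hxy hxy.symm
  have htne : t ≠ 1 := by
    intro h
    rw [h, one_smul] at htx
    exact hxy htx
  have ht2 : t ^ 2 = 1 := by
    apply key x y hxy
    · rw [pow_two, mul_smul, htx, hty, one_smul]
    · rw [pow_two, mul_smul, hty, htx, one_smul]
  have hordt : orderOf t = 2 := by
    haveI : Fact (Nat.Prime 2) := ⟨by norm_num⟩
    exact orderOf_eq_prime ht2 htne
  -- the element g sending x ↦ y ↦ z
  obtain ⟨g, ⟨hgx, hgy⟩, -⟩ := huniq x y y z hxy hzy.symm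
  have hgne : g ≠ 1 := by
    intro h
    rw [h, one_smul] at hgx
    exact hxy hgx
  have hg2 : g ^ 2 ≠ 1 := by
    intro h
    have : (g ^ 2) • x = x := by rw [h, one_smul]
    rw [pow_two, mul_smul, hgx, hgy] at this
    exact hzx this
  have hordg1 : orderOf g ≠ 1 := by
    intro h
    exact hgne (orderOf_eq_one_iff.mp h)
  have hordg2 : orderOf g ≠ 2 := by
    intro h
    exact hg2 (by rw [← h]; exact pow_orderOf_eq_one g)
  have conjOrd : ∀ a b : G, IsConj a b → orderOf a = orderOf b := by
    intro a b h
    obtain ⟨c, hc⟩ := h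
    exact SemiconjBy.orderOf_eq _ hc
  -- three pairwise non-conjugate elements: 1, t, g
  have h12 : ¬ IsConj (1 : G) t := by
    intro h
    have := conjOrd _ _ h
    rw [orderOf_one, hordt] at this
    norm_num at this
  have h13 : ¬ IsConj (1 : G) g := by
    intro h
    exact hordg1 ((conjOrd _ _ h).symm.trans orderOf_one)
  have h23 : ¬ IsConj t g := by
    intro h
    exact hordg2 ((conjOrd _ _ h) ▸ hordt)
  refine ⟨⟨1, t, g, h12, h13, h23⟩, ?_⟩
  -- at least three conjugacy classes
  have e12 : ConjClasses.mk (1 : G) ≠ ConjClasses.mk t :=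
    fun h => h12 (ConjClasses.mk_eq_mk_iff_isConj.mp h)
  have e13 : ConjClasses.mk (1 : G) ≠ ConjClasses.mk g :=
    fun h => h13 (ConjClasses.mk_eq_mk_iff_isConj.mp h)
  have e23 : ConjClasses.mk t ≠ ConjClasses.mk g :=
    fun h => h23 (ConjClasses.mk_eq_mk_iff_isConj.mp h)
  have hcard : ({ConjClasses.mk 1, ConjClasses.mk t, ConjClasses.mk g} :
      Finset (ConjClasses G)).card = 3 := by
    rw [Finset.card_insert_of_notMem (by simp [e12, e13]),
      Finset.card_insert_of_notMem (by simp [e23]), Finset.card_singleton]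
  calc (3 : Cardinal) = Cardinal.mk (({ConjClasses.mk 1, ConjClasses.mk t, ConjClasses.mk g} :
        Finset (ConjClasses G)) : Set (ConjClasses G)) := by
        simp [Cardinal.mk_coe_finset, hcard]
    _ ≤ Cardinal.mk (ConjClasses G) := Cardinal.mk_set_le _
end

section
/- Let G be a group acting sharply 2-transitively on a set X. Then G contains an involution, and any two involutions of G are conjugate in G. -/
/-- A sharply 2-transitive group contains an involution, and all its involutions
are conjugate. -/
theorem stmt_8 {G X : Type*} [Group G] [MulAction G X]
    (h2t : SharplyTwoTransitive G X) :
    (∃ u : G, IsInvolution u) ∧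
    ∀ u v : G, IsInvolution u → IsInvolution v → IsConj u v := by
  obtain ⟨hX, htrans⟩ := h2t
  obtain ⟨a, b, hab⟩ := hX
  have moves : ∀ g : G, g ≠ 1 → ∃ x : X, g • x ≠ x := by
    intro g hg
    by_contra h
    push_neg at h
    exact hg ((htrans a b a b hab hab).unique ⟨h a, h b⟩ ⟨one_smul G a, one_smul G b⟩)
  constructor
  · obtain ⟨g, ⟨hga, hgb⟩, _⟩ := htrans a b b a hab hab.symm
    have hg1 : g ≠ 1 := by
      intro h; rw [h, one_smul] at hga; exact hab hga
    have hgg : g * g = 1 :=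
      (htrans a b a b hab hab).unique
        ⟨by rw [mul_smul, hga, hgb], by rw [mul_smul, hgb, hga]⟩
        ⟨one_smul G a, one_smul G b⟩
    exact ⟨g, orderOf_eq_prime (by rw [sq]; exact hgg) hg1⟩
  · intro u v hu hv
    have hu1 : u ≠ 1 := by
      intro h; rw [IsInvolution, h, orderOf_one] at hu; norm_num at hu
    have hv1 : v ≠ 1 := by
      intro h; rw [IsInvolution, h, orderOf_one] at hv; norm_num at hv
    have huu : u * u = 1 := by
      have := pow_orderOf_eq_one u; rwa [hu, sq] at this
    have hvv : v * v = 1 := by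
      have := pow_orderOf_eq_one v; rwa [hv, sq] at this
    obtain ⟨x, hx⟩ := moves u hu1
    obtain ⟨x', hx'⟩ := moves v hv1
    set y := u • x with hy
    set y' := v • x' with hy'
    have huy : u • y = x := by rw [hy, ← mul_smul, huu, one_smul]
    have hvy' : v • y' = x' := by rw [hy', ← mul_smul, hvv, one_smul]
    obtain ⟨g, ⟨hg1, hg2⟩, _⟩ := htrans x y x' y' (Ne.symm hx) (Ne.symm hx')
    have hinvx : g⁻¹ • x' = x := by rw [← hg1, inv_smul_smul]
    have hinvy : g⁻¹ • y' = y := by rw [← hg2, inv_smul_smul]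
    have key : g * u * g⁻¹ = v :=
      (htrans x' y' y' x' (Ne.symm hx') hx').unique
        ⟨by rw [mul_smul, mul_smul, hinvx, ← hy, hg2],
         by rw [mul_smul, mul_smul, hinvy, huy, hg1]⟩
        ⟨hy'.symm, hvy'⟩
    exact isConj_iff.mpr ⟨g, key⟩
end

section
/- Let G be a group acting sharply 2-transitively on a set X, with the action not of characteristic 2 (i.e., some involution of G has a fixed point in X). If u and v are two distinct involutions of G such that the element uv has finite order n, then n is a prime number. -/
section Aux

variable {G X : Type*} [Group G] [MulAction G X]

lemma aux_stab2 (h2t : SharplyTwoTransitive G X) {g : G} {x y : X} (hxy : x ≠ y)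
    (hx : g • x = x) (hy : g • y = y) : g = 1 := by
  obtain ⟨w, -, hw⟩ := h2t.2 x y x y hxy hxy
  exact (hw g ⟨hx, hy⟩).trans (hw 1 ⟨one_smul _ _, one_smul _ _⟩).symm

lemma aux_swap_unique (h2t : SharplyTwoTransitive G X) {a b : X} (hab : a ≠ b) {g g' : G}
    (h1 : g • a = b) (h2 : g • b = a) (h1' : g' • a = b) (h2' : g' • b = a) : g = g' := by
  obtain ⟨w, -, hw⟩ := h2t.2 a b b a hab hab.symm
  exact (hw g ⟨h1, h2⟩).trans (hw g' ⟨h1', h2'⟩).symm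

lemma aux_sq {u : G} (hu : IsInvolution u) : u * u = 1 := by
  have h : orderOf u = 2 := hu
  have := pow_orderOf_eq_one u
  rwa [h, pow_two] at this

lemma aux_ne_one {u : G} (hu : IsInvolution u) : u ≠ 1 := by
  intro h
  have h2 : orderOf u = 2 := hu
  rw [h, orderOf_one] at h2
  exact absurd h2 (by norm_num)

lemma aux_smul_smul {u : G} (hu : IsInvolution u) (y : X) : u • u • y = y := by
  rw [← mul_smul, aux_sq hu, one_smul]

lemma aux_exists_moved (h2t : SharplyTwoTransitive G X) {u : G} (hu : u ≠ 1) :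
    ∃ y : X, u • y ≠ y := by
  by_contra h
  push_neg at h
  obtain ⟨a, b, hab⟩ := h2t.1
  exact hu (aux_stab2 h2t hab (h a) (h b))

lemma aux_orderOf_conj (g x : G) : orderOf (g * x * g⁻¹) = orderOf x := by
  simpa using orderOf_injective (MulAut.conj g).toMonoidHom (MulAut.conj g).injective x

/-- Every involution has a fixed point (given that one involution does). -/
lemma aux_fix_exists (h2t : SharplyTwoTransitive G X)
    (hchar : ∃ (u : G) (x : X), IsInvolution u ∧ u • x = x)
    {w : G} (hw : IsInvolution w) : ∃ x : X, w • x = x := by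
  obtain ⟨u, x0, hu, hux⟩ := hchar
  obtain ⟨y, hy⟩ := aux_exists_moved h2t (aux_ne_one hw)
  obtain ⟨p, hp⟩ := aux_exists_moved h2t (aux_ne_one hu)
  obtain ⟨h, ⟨h1, h2⟩, -⟩ := h2t.2 p (u • p) y (w • y) (Ne.symm hp) (Ne.symm hy)
  have hinvp : h⁻¹ • y = p := by rw [← h1, inv_smul_smul]
  have hinv2 : h⁻¹ • (w • y) = u • p := by rw [← h2, inv_smul_smul]
  have hwc : w = h * u * h⁻¹ := by
    refine aux_swap_unique h2t (Ne.symm hy) rfl (aux_smul_smul hw y) ?_ ?_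
    · rw [mul_smul, mul_smul, hinvp, h2]
    · rw [mul_smul, mul_smul, hinv2, aux_smul_smul hu, h1]
  exact ⟨h • x0, by rw [hwc, mul_smul, mul_smul, inv_smul_smul, hux]⟩

/-- Two involutions with the same fixed point are equal. -/
lemma aux_fix_unique (h2t : SharplyTwoTransitive G X) {i j : G} {x : X}
    (hi : IsInvolution i) (hj : IsInvolution j)
    (hix : i • x = x) (hjx : j • x = x) : i = j := by
  by_contra hij
  haveI := h2t.1
  obtain ⟨y, hyx⟩ := exists_ne x
  have hiy : i • y ≠ y := fun h => aux_ne_one hi (aux_stab2 h2t hyx h hix)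
  have hjy : j • y ≠ y := fun h => aux_ne_one hj (aux_stab2 h2t hyx h hjx)
  obtain ⟨g, ⟨hg1, hg2⟩, -⟩ := h2t.2 y (i • y) y (j • y) (Ne.symm hiy) (Ne.symm hjy)
  have hginv : g⁻¹ • y = y := inv_smul_eq_iff.mpr hg1.symm
  have hginv2 : g⁻¹ • (j • y) = i • y := by rw [← hg2, inv_smul_smul]
  have hj' : j = g * i * g⁻¹ := by
    refine aux_swap_unique h2t (Ne.symm hjy) rfl (aux_smul_smul hj y) ?_ ?_
    · rw [mul_smul, mul_smul, hginv, hg2]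
    · rw [mul_smul, mul_smul, hginv2, aux_smul_smul hi, hg1]
  have hgx : g • x = x := by
    by_contra hgx
    have hfix : j • (g • x) = g • x := by
      rw [hj', mul_smul, mul_smul, inv_smul_smul, hix]
    exact aux_ne_one hj (aux_stab2 h2t (fun h => hgx h.symm) hjx hfix)
  have hg_one : g = 1 := aux_stab2 h2t hyx hg1 hgx
  rw [hj', hg_one] at hij
  simp at hij

/-- The order of a product of two distinct involutions does not depend on the pair. -/
lemma aux_order_const (h2t : SharplyTwoTransitive G X)
    (hchar : ∃ (u : G) (x : X), IsInvolution u ∧ u • x = x)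
    {i j k l : G} (hi : IsInvolution i) (hj : IsInvolution j)
    (hk : IsInvolution k) (hl : IsInvolution l)
    (hij : i ≠ j) (hkl : k ≠ l) : orderOf (i * j) = orderOf (k * l) := by
  obtain ⟨a, ha⟩ := aux_fix_exists h2t hchar hi
  obtain ⟨b, hb⟩ := aux_fix_exists h2t hchar hj
  obtain ⟨c, hc⟩ := aux_fix_exists h2t hchar hk
  obtain ⟨d, hd⟩ := aux_fix_exists h2t hchar hl
  have hab : a ≠ b := fun h => hij (aux_fix_unique h2t hi hj ha (by rw [h]; exact hb))
  have hcd : c ≠ d := fun h => hkl (aux_fix_unique h2t hk hl hc (by rw [h]; exact hd))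
  obtain ⟨g, ⟨hg1, hg2⟩, -⟩ := h2t.2 a b c d hab hcd
  have hik : IsInvolution (g * i * g⁻¹) := by
    show orderOf _ = 2
    rw [aux_orderOf_conj]; exact hi
  have hjl : IsInvolution (g * j * g⁻¹) := by
    show orderOf _ = 2
    rw [aux_orderOf_conj]; exact hj
  have hkc : (g * i * g⁻¹) • c = c := by
    rw [← hg1, mul_smul, mul_smul, inv_smul_smul, ha]
  have hld : (g * j * g⁻¹) • d = d := by
    rw [← hg2, mul_smul, mul_smul, inv_smul_smul, hb]
  have hk' : k = g * i * g⁻¹ := aux_fix_unique h2t hk hik hc hkc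
  have hl' : l = g * j * g⁻¹ := aux_fix_unique h2t hl hjl hd hld
  have : k * l = g * (i * j) * g⁻¹ := by rw [hk', hl']; group
  rw [this, aux_orderOf_conj]

end Aux

/-- In a sharply 2-transitive group of characteristic different from 2, if the product of two
distinct involutions has finite order `n`, then `n` is prime. -/
theorem stmt_9 {G X : Type*} [Group G] [MulAction G X]
    (h2t : SharplyTwoTransitive G X)
    (hchar : ∃ (u : G) (x : X), IsInvolution u ∧ u • x = x)
    (u v : G) (hu : IsInvolution u) (hv : IsInvolution v) (huv : u ≠ v)
    (n : ℕ) (hn : n ≠ 0) (hord : orderOf (u * v) = n) :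
    n.Prime := by
  set t := u * v with ht
  have husq := aux_sq hu
  have hvsq := aux_sq hv
  have hui : u⁻¹ = u := inv_eq_of_mul_eq_one_left husq
  have hvi : v⁻¹ = v := inv_eq_of_mul_eq_one_left hvsq
  have ht1 : t ≠ 1 := by
    intro h
    apply huv
    have huvuu : u * v = u * u := by rw [← ht, h, husq]
    exact (mul_left_cancel huvuu).symm
  have hn1 : n ≠ 1 := fun h => ht1 (orderOf_eq_one_iff.mp (hord.trans h))
  have hn2 : 2 ≤ n := by omega
  by_contra hnp
  obtain ⟨m, hmdvd, hm2, hmn⟩ := Nat.exists_dvd_of_not_prime2 hn2 hnp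
  set k := n / m with hk
  have hkm : k * m = n := Nat.div_mul_cancel hmdvd
  have hk0 : k ≠ 0 := by
    intro h; rw [h, zero_mul] at hkm; omega
  have hkdvd : k ∣ n := ⟨m, hkm.symm⟩
  have hts : orderOf (t ^ k) = m := by
    rw [orderOf_pow' t hk0, hord, Nat.gcd_eq_right hkdvd, ← hkm,
      Nat.mul_div_cancel_left m (Nat.pos_of_ne_zero hk0)]
  -- u inverts t
  have hconj : u * t * u⁻¹ = t⁻¹ := by
    rw [ht, hui, mul_inv_rev, hui, hvi]
    rw [← mul_assoc, husq, one_mul]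
  have hconjk : u * t ^ k * u⁻¹ = (t ^ k)⁻¹ := by
    rw [← inv_pow, ← hconj, ← conj_pow]
  set l := u * t ^ k with hl
  have htk1 : t ^ k ≠ 1 := by
    intro h
    rw [h, orderOf_one] at hts
    omega
  have hlsq : l * l = 1 := by
    have : u * t ^ k * u = (t ^ k)⁻¹ := by rw [← hconjk, hui]
    calc l * l = (u * t ^ k * u) * t ^ k := by rw [hl]; group
      _ = (t ^ k)⁻¹ * t ^ k := by rw [this]
      _ = 1 := inv_mul_cancel _
  have hl1 : l ≠ 1 := by
    intro h
    have htk : t ^ k = u := by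
      have : u * (u * t ^ k) = u * 1 := by rw [← hl, h]
      rw [← mul_assoc, husq, one_mul, mul_one] at this
      exact this
    have htt : t⁻¹ = t := by
      rw [← hconj, ← htk]
      group
    have ht2 : t * t = 1 := by
      have h0 := inv_mul_cancel t
      rwa [htt] at h0
    have : orderOf t ∣ 2 := orderOf_dvd_of_pow_eq_one (by rw [pow_two]; exact ht2)
    rw [hord] at this
    have := Nat.le_of_dvd (by norm_num) this
    omega
  have hlinv : IsInvolution l :=
    orderOf_eq_prime (by rw [pow_two]; exact hlsq) hl1
  have hul : u ≠ l := by
    intro h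
    apply htk1
    have : u * 1 = u * t ^ k := by rw [mul_one, ← hl, ← h]
    exact (mul_left_cancel this).symm
  have hconst := aux_order_const h2t hchar hu hv hu hlinv huv hul
  have hulk : u * l = t ^ k := by rw [hl, ← mul_assoc, husq, one_mul]
  rw [← ht, hord, hulk, hts] at hconst
  omega
end

section
/- Let G be a group belonging to the class C, and let h ∈ G be an element of infinite order that centralizes some involution of G (a homothety). Then h is not a product of two distinct involutions of G (a translation). Hence, in a group of the class C, the three types of infinite-order elements (translation, homothety, isolated) are mutually exclusive. -/
/-- A subgroup `D ≤ G` is malnormal if `D ∩ gDg⁻¹` is trivial for every `g ∉ D`. -/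
def IsMalnormal {G : Type*} [Group G] (D : Subgroup G) : Prop :=
  ∀ g : G, g ∉ D → ∀ x : G, x ∈ D → g * x * g⁻¹ ∈ D → x = 1

/-- A subgroup `D ≤ G` is quasi-malnormal if `D ∩ gDg⁻¹` has at most 2 elements
for every `g ∉ D`. -/
def IsQuasiMalnormal {G : Type*} [Group G] (D : Subgroup G) : Prop :=
  ∀ g : G, g ∉ D → {x : G | x ∈ D ∧ g * x * g⁻¹ ∈ D}.encard ≤ 2
/-- `AddAut A` as multiplicative automorphisms of `Multiplicative A`. -/
def addAutToMulAut (A : Type*) [AddGroup A] : Multiplicative (AddAut A) →* MulAut (Multiplicative A) where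
  toFun f := AddEquiv.toMultiplicative (Multiplicative.toAdd f)
  map_one' := rfl
  map_mul' _ _ := rfl

/-- The action of `ℤˣ = {±1} ≃ ℤ/2ℤ` on `ℚ` by multiplication (i.e. the nontrivial element
acts by negation), as automorphisms of the additive group `ℚ` written multiplicatively. -/
def dqAut : ℤˣ →* MulAut (Multiplicative ℚ) :=
  (addAutToMulAut ℚ).comp (DistribMulAction.toAddAut ℤˣ ℚ)

/-- The group `D_ℚ = ℚ ⋊ ℤ/2ℤ`, where `ℤ/2ℤ` acts by negation. -/
abbrev DQ : Type := SemidirectProduct (Multiplicative ℚ) ℤˣ dqAut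
/-- A pair of distinct involutions `(u, v)` has type `D_ℤ` if `⟨u, v⟩` is contained in a
quasi-malnormal subgroup of `G` isomorphic to the infinite dihedral group
`D_ℤ = ℤ ⋊ ℤ/2ℤ` (which is `DihedralGroup 0` in Mathlib). -/
def PairTypeDZ {G : Type*} [Group G] (u v : G) : Prop :=
  ∃ D : Subgroup G, Subgroup.closure {u, v} ≤ D ∧ IsQuasiMalnormal D ∧
    Nonempty (D ≃* DihedralGroup 0)

/-- A pair of distinct involutions `(u, v)` has type `D_ℚ` if `⟨u, v⟩` is contained in a
subgroup of `G` isomorphic to `D_ℚ = ℚ ⋊ ℤ/2ℤ`. -/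
def PairTypeDQ {G : Type*} [Group G] (u v : G) : Prop :=
  ∃ D : Subgroup G, Subgroup.closure {u, v} ≤ D ∧ Nonempty (D ≃* DQ)

/-- The class `𝒞`: (1) `G` acts by conjugation transitively on its involutions and freely on
ordered pairs of distinct involutions; (2) every pair of distinct involutions has type `D_ℤ`
or type `D_ℚ`; (3) there is a pair of type `D_ℚ`, and `G` acts transitively (by conjugation)
on the set of pairs of type `D_ℚ`. -/
def ClassC (G : Type*) [Group G] : Prop :=
  (∀ u v : G, IsInvolution u → IsInvolution v → ∃ g : G, g * u * g⁻¹ = v) ∧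
  (∀ u v g : G, IsInvolution u → IsInvolution v → u ≠ v →
      g * u * g⁻¹ = u → g * v * g⁻¹ = v → g = 1) ∧
  (∀ u v : G, IsInvolution u → IsInvolution v → u ≠ v → PairTypeDZ u v ∨ PairTypeDQ u v) ∧
  (∃ u v : G, IsInvolution u ∧ IsInvolution v ∧ u ≠ v ∧ PairTypeDQ u v) ∧
  (∀ u v u' v' : G, IsInvolution u → IsInvolution v → u ≠ v → PairTypeDQ u v →
      IsInvolution u' → IsInvolution v' → u' ≠ v' → PairTypeDQ u' v' →
      ∃ g : G, g * u * g⁻¹ = u' ∧ g * v * g⁻¹ = v')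

/-- A translation is an element of infinite order which is a product of two
distinct involutions. -/
def IsTranslation {G : Type*} [Group G] (h : G) : Prop :=
  orderOf h = 0 ∧ ∃ u v : G, IsInvolution u ∧ IsInvolution v ∧ u ≠ v ∧ h = u * v

/-- A homothety is an element of infinite order centralizing some involution. -/
def IsHomothety {G : Type*} [Group G] (h : G) : Prop :=
  orderOf h = 0 ∧ ∃ u : G, IsInvolution u ∧ h * u = u * h

/-- An element is isolated if it has infinite order and lies in a malnormal infinite
cyclic subgroup. -/
def IsIsolated {G : Type*} [Group G] (h : G) : Prop :=
  orderOf h = 0 ∧ ∃ Z : Subgroup G, h ∈ Z ∧ IsMalnormal Z ∧ IsCyclic Z ∧ Infinite Z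

/-- The 3-type condition: every element has order 1, 2 or infinite, and every element of
infinite order is a translation, a homothety, or isolated. -/
def ThreeTypeCondition (G : Type*) [Group G] : Prop :=
  (∀ g : G, orderOf g = 1 ∨ orderOf g = 2 ∨ orderOf g = 0) ∧
  (∀ g : G, orderOf g = 0 → IsTranslation g ∨ IsHomothety g ∨ IsIsolated g)

/-- The class `𝒞'`: groups in `𝒞` satisfying the 3-type condition. -/
def ClassC' (G : Type*) [Group G] : Prop := ClassC G ∧ ThreeTypeCondition G


section Aux

variable {G : Type*} [Group G]

lemma inv_of_sq {u : G} (h2 : u * u = 1) : u⁻¹ = u := by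
  rw [inv_eq_iff_mul_eq_one]; exact h2

/-- If the conjugation action on pairs of distinct involutions is free, `w` is an involution
commuting with `h` of infinite order, and the involution `t` inverts `h`, then `t` and `w`
commute. -/
lemma key_comm
    (hfree : ∀ u v g : G, IsInvolution u → IsInvolution v → u ≠ v →
      g * u * g⁻¹ = u → g * v * g⁻¹ = v → g = 1)
    {h w t : G} (hord : orderOf h = 0)
    (hw : IsInvolution w) (ht : IsInvolution t)
    (hcomm : h * w = w * h) (hinv : t * h * t⁻¹ = h⁻¹) :
    t * w * t⁻¹ = w := by
  by_contra hne
  -- s := t * w * t⁻¹ is an involution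
  have hw2 : w * w = 1 := by
    have := pow_orderOf_eq_one w; rw [hw] at this; simpa [pow_succ, pow_two] using this
  have hw1 : w ≠ 1 := by
    intro e; rw [e] at hw; simp [IsInvolution] at hw
  have hs : IsInvolution (t * w * t⁻¹) := by
    refine orderOf_eq_prime ?_ ?_
    · have e1 : (t * w * t⁻¹) * (t * w * t⁻¹) = t * (w * w) * t⁻¹ := by group
      rw [pow_two, e1, hw2]; group
    · intro e
      apply hw1
      have : w = t⁻¹ * (t * w * t⁻¹) * t := by group
      rw [this, e]; group
  -- h fixes w by conjugation
  have hfw : h * w * h⁻¹ = w := by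
    rw [hcomm]; group
  -- h fixes s by conjugation
  have hfs : h * (t * w * t⁻¹) * h⁻¹ = t * w * t⁻¹ := by
    have h1 : t⁻¹ * h * t = h⁻¹ := by
      have ht2 : t * t = 1 := by
        have := pow_orderOf_eq_one t; rw [ht] at this; simpa [pow_succ, pow_two] using this
      have hti : t⁻¹ = t := inv_of_sq ht2
      calc t⁻¹ * h * t = t * h * t⁻¹ := by rw [hti]
        _ = h⁻¹ := hinv
    have hfw' : h⁻¹ * w * h = w := by
      calc h⁻¹ * w * h = h⁻¹ * (h * w * h⁻¹) * h := by rw [hfw]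
        _ = w := by group
    calc h * (t * w * t⁻¹) * h⁻¹
        = t * ((t⁻¹ * h * t) * w * (t⁻¹ * h * t)⁻¹) * t⁻¹ := by group
      _ = t * (h⁻¹ * w * h) * t⁻¹ := by rw [h1]; group
      _ = t * w * t⁻¹ := by rw [hfw']
  have := hfree w (t * w * t⁻¹) h hw hs (fun e => hne e.symm) hfw hfs
  rw [this] at hord
  simp at hord

lemma homothety_not_translation
    (hfree : ∀ u v g : G, IsInvolution u → IsInvolution v → u ≠ v →
      g * u * g⁻¹ = u → g * v * g⁻¹ = v → g = 1)
    {h : G} (hord : orderOf h = 0) (hH : IsHomothety h) (hT : IsTranslation h) : False := by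
  obtain ⟨-, w, hw, hcw⟩ := hH
  obtain ⟨-, u, v, hu, hv, huv, heq⟩ := hT
  have hu2 : u * u = 1 := by
    have := pow_orderOf_eq_one u; rw [hu] at this; simpa [pow_succ, pow_two] using this
  have hv2 : v * v = 1 := by
    have := pow_orderOf_eq_one v; rw [hv] at this; simpa [pow_succ, pow_two] using this
  have hui : u⁻¹ = u := inv_of_sq hu2
  have hvi : v⁻¹ = v := inv_of_sq hv2
  -- u inverts h
  have hinvu : u * h * u⁻¹ = h⁻¹ := by
    rw [heq, hui, mul_inv_rev, hui, hvi]
    calc u * (u * v) * u = (u * u) * v * u := by group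
      _ = v * u := by rw [hu2]; group
  -- v inverts h
  have hinvv : v * h * v⁻¹ = h⁻¹ := by
    rw [heq, hvi, mul_inv_rev, hui, hvi]
    calc v * (u * v) * v = v * u * (v * v) := by group
      _ = v * u := by rw [hv2]; group
  have hcw' : h * w = w * h := hcw.symm ▸ hcw
  have c1 : u * w * u⁻¹ = w := key_comm hfree hord hw hu hcw hinvu
  have c2 : v * w * v⁻¹ = w := key_comm hfree hord hw hv hcw hinvv
  -- w fixes u and v
  have f1 : w * u * w⁻¹ = u := by
    have hw2 : w * w = 1 := by
      have := pow_orderOf_eq_one w; rw [hw] at this; simpa [pow_succ, pow_two] using this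
    have hwi : w⁻¹ = w := inv_of_sq hw2
    have : u * w = w * u := by
      calc u * w = (u * w * u⁻¹) * u := by group
        _ = w * u := by rw [c1]
    rw [hwi]
    calc w * u * w = w * (u * w) := by group
      _ = w * (w * u) := by rw [this]
      _ = (w * w) * u := by group
      _ = u := by rw [hw2]; group
  have f2 : w * v * w⁻¹ = v := by
    have hw2 : w * w = 1 := by
      have := pow_orderOf_eq_one w; rw [hw] at this; simpa [pow_succ, pow_two] using this
    have hwi : w⁻¹ = w := inv_of_sq hw2
    have : v * w = w * v := by
      calc v * w = (v * w * v⁻¹) * v := by group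
        _ = w * v := by rw [c2]
    rw [hwi]
    calc w * v * w = w * (v * w) := by group
      _ = w * (w * v) := by rw [this]
      _ = (w * w) * v := by group
      _ = v := by rw [hw2]; group
  have := hfree u v w hu hv huv f1 f2
  rw [this] at hw
  simp [IsInvolution] at hw

end Aux

/-- In a group of the class `𝒞`, an element of infinite order which is a homothety cannot be
a translation; hence the three types of infinite-order elements (translation, homothety,
isolated) are mutually exclusive. -/
theorem stmt_11 {G : Type*} [Group G] (hC : ClassC G) (h : G) (hord : orderOf h = 0) :
    (IsHomothety h → ¬ IsTranslation h) ∧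
    (IsIsolated h → ¬ IsTranslation h ∧ ¬ IsHomothety h) := by
  have hfree := hC.2.1
  constructor
  · intro hH hT
    exact homothety_not_translation hfree hord hH hT
  · intro hI
    obtain ⟨-, Z, hhZ, hmal, hcyc, hinf⟩ := hI
    constructor
    · rintro ⟨-, u, v, hu, hv, huv, heq⟩
      have hu2 : u * u = 1 := by
        have := pow_orderOf_eq_one u; rw [hu] at this; simpa [pow_succ, pow_two] using this
      have hv2 : v * v = 1 := by
        have := pow_orderOf_eq_one v; rw [hv] at this; simpa [pow_succ, pow_two] using this
      have hui : u⁻¹ = u := inv_of_sq hu2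
      have hvi : v⁻¹ = v := inv_of_sq hv2
      have hinvu : u * h * u⁻¹ = h⁻¹ := by
        rw [heq, hui, mul_inv_rev, hui, hvi]
        calc u * (u * v) * u = (u * u) * v * u := by group
          _ = v * u := by rw [hu2]; group
      -- u ∉ Z : else u commutes with h (Z cyclic hence abelian), so h² = 1.
      have huZ : u ∉ Z := by
        intro huZ
        obtain ⟨g, hg⟩ := hcyc.exists_generator
        obtain ⟨m, hm⟩ := hg ⟨h, hhZ⟩
        obtain ⟨n, hn⟩ := hg ⟨u, huZ⟩
        have hcom : u * h = h * u := by
          have : (⟨u, huZ⟩ : Z) * ⟨h, hhZ⟩ = ⟨h, hhZ⟩ * ⟨u, huZ⟩ := by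
            rw [← hm, ← hn, ← zpow_add, ← zpow_add, add_comm]
          exact congrArg Subtype.val this
        have : h⁻¹ = h := by
          rw [← hinvu, hui]
          calc u * h * u = h * u * u := by rw [hcom]
            _ = h * (u * u) := by group
            _ = h := by rw [hu2]; group
        have h2 : h * h = 1 := by
          nth_rewrite 2 [← this]
          group
        have : orderOf h = 2 ∨ orderOf h = 1 := by
          rcases eq_or_ne h 1 with he | he
          · right; simp [he]
          · left; exact orderOf_eq_prime (by rw [pow_two]; exact h2) he
        rcases this with he | he <;> rw [he] at hord <;> simp at hord
      have := hmal u huZ h hhZ (by rw [hinvu]; exact Z.inv_mem hhZ)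
      rw [this] at hord; simp at hord
    · rintro ⟨-, w, hw, hcw⟩
      have hw2 : w * w = 1 := by
        have := pow_orderOf_eq_one w; rw [hw] at this; simpa [pow_succ, pow_two] using this
      have hw1 : w ≠ 1 := by intro e; rw [e] at hw; simp [IsInvolution] at hw
      by_cases hwZ : w ∈ Z
      · -- Z is infinite cyclic, hence torsion-free: contradiction with w of order 2
        obtain ⟨g, hg⟩ := hcyc.exists_generator
        have hgord : orderOf (g : Z) = 0 := by
          by_contra hne
          have : IsOfFinOrder g := orderOf_pos_iff.mp (Nat.pos_of_ne_zero hne)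
          have hfin : (Subgroup.zpowers g : Set Z).Finite := by
            have := this.finite_zpowers
            exact this
          have : Finite Z := by
            have hZ : (Subgroup.zpowers g : Set Z) = Set.univ := by
              ext x; simp [hg x]
            rw [hZ] at hfin
            exact Set.finite_univ_iff.mp hfin
          exact (not_finite_iff_infinite.mpr hinf) this
        obtain ⟨n, hn⟩ := hg ⟨w, hwZ⟩
        have hone : (⟨w, hwZ⟩ : Z) * ⟨w, hwZ⟩ = 1 := by
          ext; simpa using hw2
        rw [← hn, ← zpow_add] at hone
        have hmod := zpow_eq_one_iff_modEq.mp hone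
        rw [hgord] at hmod
        have hdvd : (0 : ℤ) ∣ n + n := by
          simpa using (Int.modEq_zero_iff_dvd).mp hmod
        have hn0 : n = 0 := by
          have := zero_dvd_iff.mp hdvd; omega
        rw [hn0] at hn
        apply hw1
        have : (⟨w, hwZ⟩ : Z) = 1 := by rw [← hn]; simp
        simpa using congrArg Subtype.val this
      · have := hmal w hwZ h hhZ (by
          have : w * h * w⁻¹ = h := by
            rw [← hcw]; group
          rw [this]; exact hhZ)
        rw [this] at hord; simp at hord
end

section
/- Let G be a group in which every finite subgroup has order at most 2. Then every infinite virtually cyclic subgroup of G is isomorphic to ℤ, to ℤ × ℤ/2ℤ, or to the infinite dihedral group D_ℤ = ℤ ⋊ ℤ/2ℤ. -/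
/-- A group is virtually cyclic if it has a cyclic subgroup of finite index. -/
def VirtuallyCyclic (H : Type*) [Group H] : Prop :=
  ∃ K : Subgroup H, IsCyclic K ∧ K.FiniteIndex

private lemma zpowers_isCyclic' {G : Type*} [Group G] (g : G) :
    IsCyclic (Subgroup.zpowers g) := by
  refine ⟨⟨⟨g, Subgroup.mem_zpowers g⟩, fun x => ?_⟩⟩
  obtain ⟨k, hk⟩ := Subgroup.mem_zpowers_iff.mp x.2
  exact ⟨k, Subtype.ext (by simpa using hk)⟩

private def zmodZeroToInt : ZMod 0 → ℤ := fun i => i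
private def zmodZeroOfInt : ℤ → ZMod 0 := fun i => i

private def dihedralMap {H : Type*} [Group H] (s ω : H) : DihedralGroup 0 → H
  | DihedralGroup.r i => ω ^ zmodZeroToInt i
  | DihedralGroup.sr i => s * ω ^ zmodZeroToInt i

private lemma dihedralMap_r {H : Type*} [Group H] (s ω : H) (i : ZMod 0) :
    dihedralMap s ω (DihedralGroup.r i) = ω ^ zmodZeroToInt i := rfl

private lemma dihedralMap_sr {H : Type*} [Group H] (s ω : H) (i : ZMod 0) :
    dihedralMap s ω (DihedralGroup.sr i) = s * ω ^ zmodZeroToInt i := rfl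

private lemma toInt_add (i j : ZMod 0) :
    zmodZeroToInt (i + j) = zmodZeroToInt i + zmodZeroToInt j := rfl

private lemma toInt_sub (i j : ZMod 0) :
    zmodZeroToInt (i - j) = zmodZeroToInt i - zmodZeroToInt j := rfl

private lemma toInt_zero : zmodZeroToInt 0 = 0 := rfl

private lemma toInt_ofInt (k : ℤ) : zmodZeroToInt (zmodZeroOfInt k) = k := rfl

private def dihedralHom {H : Type*} [Group H] (s ω : H) (hss : s * s = 1)
    (hωs : ∀ k : ℤ, ω ^ k * s = s * ω ^ (-k)) : DihedralGroup 0 →* H where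
  toFun := dihedralMap s ω
  map_one' := by
    rw [DihedralGroup.one_def, dihedralMap_r, toInt_zero, zpow_zero]
  map_mul' := by
    rintro (i | i) (j | j)
    · show dihedralMap s ω (DihedralGroup.r (i + j)) =
        dihedralMap s ω (DihedralGroup.r i) * dihedralMap s ω (DihedralGroup.r j)
      rw [dihedralMap_r, dihedralMap_r, dihedralMap_r, toInt_add, zpow_add]
    · show dihedralMap s ω (DihedralGroup.sr (j - i)) =
        dihedralMap s ω (DihedralGroup.r i) * dihedralMap s ω (DihedralGroup.sr j)
      rw [dihedralMap_r, dihedralMap_sr, dihedralMap_sr, toInt_sub]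
      rw [← mul_assoc, hωs (zmodZeroToInt i), mul_assoc, ← zpow_add, sub_eq_neg_add]
    · show dihedralMap s ω (DihedralGroup.sr (i + j)) =
        dihedralMap s ω (DihedralGroup.sr i) * dihedralMap s ω (DihedralGroup.r j)
      rw [dihedralMap_sr, dihedralMap_sr, dihedralMap_r, toInt_add, zpow_add, mul_assoc]
    · show dihedralMap s ω (DihedralGroup.r (j - i)) =
        dihedralMap s ω (DihedralGroup.sr i) * dihedralMap s ω (DihedralGroup.sr j)
      rw [dihedralMap_r, dihedralMap_sr, dihedralMap_sr, toInt_sub]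
      calc ω ^ (zmodZeroToInt j - zmodZeroToInt i)
          = ω ^ (-(zmodZeroToInt i) + zmodZeroToInt j) := by rw [sub_eq_neg_add]
        _ = ω ^ (-(zmodZeroToInt i)) * ω ^ zmodZeroToInt j := zpow_add _ _ _
        _ = (s * s) * ω ^ (-(zmodZeroToInt i)) * ω ^ zmodZeroToInt j := by
              rw [hss, one_mul]
        _ = s * (s * ω ^ (-(zmodZeroToInt i))) * ω ^ zmodZeroToInt j := by group
        _ = s * (ω ^ zmodZeroToInt i * s) * ω ^ zmodZeroToInt j := by
              rw [← hωs (zmodZeroToInt i)]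
        _ = (s * ω ^ zmodZeroToInt i) * (s * ω ^ zmodZeroToInt j) := by group

private lemma dihedralHom_apply {H : Type*} [Group H] (s ω : H) (hss : s * s = 1)
    (hωs : ∀ k : ℤ, ω ^ k * s = s * ω ^ (-k)) (x : DihedralGroup 0) :
    dihedralHom s ω hss hωs x = dihedralMap s ω x := rfl

private theorem classify {H : Type*} [Group H] [Infinite H]
    (h2 : ∀ h : H, IsOfFinOrder h → h ^ 2 = 1)
    (hk : ∀ s t : H, s * t = t * s → s ^ 2 = 1 → t ^ 2 = 1 → s = 1 ∨ t = 1 ∨ s = t)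
    (hvc : VirtuallyCyclic H) :
    Nonempty (H ≃* Multiplicative ℤ) ∨
    Nonempty (H ≃* Multiplicative ℤ × Multiplicative (ZMod 2)) ∨
    Nonempty (H ≃* DihedralGroup 0) := by
  classical
  obtain ⟨K₀, hK₀cyc, hK₀fi⟩ := hvc
  -- Pass to the normal core: a normal, cyclic, finite-index subgroup.
  haveI : IsCyclic K₀.normalCore := Subgroup.isCyclic_of_le K₀.normalCore_le
  haveI : Infinite K₀.normalCore := by
    rw [← not_finite_iff_infinite]
    intro hfinC
    haveI : Finite (H ⧸ K₀.normalCore) := inferInstance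
    exact (Finite.of_equiv _
      (Subgroup.groupEquivQuotientProdSubgroup (s := K₀.normalCore)).symm).not_infinite
      inferInstance
  obtain ⟨g, hgen⟩ := IsCyclic.exists_generator (α := K₀.normalCore)
  set z : H := (g : H) with hzdef
  have hzC : Subgroup.zpowers z = K₀.normalCore := by
    apply le_antisymm (Subgroup.zpowers_le.mpr g.2)
    intro c hc
    obtain ⟨k, hk'⟩ := Subgroup.mem_zpowers_iff.mp (hgen ⟨c, hc⟩)
    exact Subgroup.mem_zpowers_iff.mpr ⟨k, by simpa using congrArg (Subtype.val) hk'⟩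
  haveI hZn : (Subgroup.zpowers z).Normal := by rw [hzC]; infer_instance
  haveI hZfi : (Subgroup.zpowers z).FiniteIndex := by rw [hzC]; infer_instance
  haveI hZinf : Infinite (Subgroup.zpowers z) := by rw [hzC]; infer_instance
  have hzinf : ¬ IsOfFinOrder z := by
    intro hfo
    have h0 : orderOf z = 0 := by
      rw [← Nat.card_zpowers]; exact Nat.card_eq_zero_of_infinite
    exact (orderOf_eq_zero_iff.mp h0) hfo
  have hzinj : Function.Injective fun k : ℤ => z ^ k :=
    injective_zpow_iff_not_isOfFinOrder.mpr hzinf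
  have hzeq : ∀ a b : ℤ, z ^ a = z ^ b → a = b := fun a b h => hzinj h
  -- The centralizer N of z.
  set N := Subgroup.centralizer ({z} : Set H) with hNdef
  have hmemN : ∀ x : H, x ∈ N ↔ z * x = x * z := by
    intro x
    rw [hNdef, Subgroup.mem_centralizer_iff]
    simp
  have hzN : z ∈ N := (hmemN z).mpr rfl
  have hZleN : Subgroup.zpowers z ≤ N := Subgroup.zpowers_le.mpr hzN
  have hcommz : ∀ (n : N) (k : ℤ), (n : H) * z ^ k = z ^ k * (n : H) := by
    intro n k
    have : Commute z (n : H) := (hmemN n).mp n.2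
    exact ((this.zpow_left k).symm : _)
  -- the exponent M
  haveI hsfi : ((Subgroup.zpowers z).subgroupOf N).FiniteIndex := inferInstance
  set M := ((Subgroup.zpowers z).subgroupOf N).index with hMdef
  have hM0 : M ≠ 0 := hsfi.index_ne_zero
  have hpow : ∀ n : N, ∃ k : ℤ, ((n : H)) ^ M = z ^ k := by
    intro n
    have hmem := Subgroup.pow_index_mem ((Subgroup.zpowers z).subgroupOf N) n
    rw [Subgroup.mem_subgroupOf] at hmem
    obtain ⟨k, hk'⟩ := Subgroup.mem_zpowers_iff.mp hmem
    refine ⟨k, ?_⟩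
    rw [hMdef]
    simpa using hk'.symm
  set e : N → ℤ := fun n => Classical.choose (hpow n) with hedef
  have he : ∀ n : N, ((n : H)) ^ M = z ^ (e n) := fun n => Classical.choose_spec (hpow n)
  have he_one : e 1 = 0 := by
    apply hzeq
    rw [← he 1]
    simp
  -- coercion helper
  have hcoe2 : ∀ u : N, u ^ 2 = 1 ↔ ((u : H)) ^ 2 = 1 := by
    intro u
    constructor
    · intro h; exact_mod_cast congrArg (Subtype.val) h
    · intro h; exact Subtype.ext (by push_cast; exact h)
  have hfin2' : ∀ u : N, (∃ m : ℕ, m ≠ 0 ∧ ((u : H)) ^ m = 1) → u ^ 2 = 1 := by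
    rintro u ⟨m, hm, hum⟩
    rw [hcoe2]
    exact h2 _ (isOfFinOrder_iff_pow_eq_one.mpr ⟨m, Nat.pos_of_ne_zero hm, hum⟩)
  -- any two involutions in N multiply to an involution
  have lemA : ∀ a b : N, a ^ 2 = 1 → b ^ 2 = 1 → (a * b) ^ 2 = 1 := by
    intro a b ha hb
    set x := (a : H) with hx
    set y := (b : H) with hy
    have hx2 : x * x = 1 := by rw [← pow_two]; exact (hcoe2 a).mp ha
    have hy2 : y * y = 1 := by rw [← pow_two]; exact (hcoe2 b).mp hb
    have hxinv : x⁻¹ = x := inv_eq_of_mul_eq_one_right hx2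
    have hyinv : y⁻¹ = y := inv_eq_of_mul_eq_one_right hy2
    have hconj : x * (x * y) * x⁻¹ = (x * y)⁻¹ := by
      have e1 : x * (x * y) * x⁻¹ = x * x * (y * x⁻¹) := by group
      rw [e1, hx2, one_mul, mul_inv_rev, hxinv, hyinv]
    have h1 : (x * y) ^ M = z ^ (e (a * b)) := by
      have := he (a * b); push_cast at this; exact this
    have h2' : x * (x * y) ^ M * x⁻¹ = z ^ (- e (a * b)) := by
      rw [← conj_pow, hconj, inv_pow, h1, ← zpow_neg]
    have h3 : x * (x * y) ^ M * x⁻¹ = z ^ (e (a * b)) := by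
      rw [h1]
      have := hcommz a (e (a * b))
      rw [← hx] at this
      rw [this, mul_assoc, mul_inv_cancel, mul_one]
    have he0 : e (a * b) = 0 := by
      have := hzeq _ _ (h3.symm.trans h2')
      omega
    apply hfin2' (a*b) ⟨M, hM0, ?_⟩
    push_cast
    rw [h1, he0, zpow_zero]
  -- uniqueness of the nontrivial involution in N
  have uniqInvol : ∀ a b : N, a ^ 2 = 1 → b ^ 2 = 1 → a ≠ 1 → b ≠ 1 → a = b := by
    intro a b ha hb ha1 hb1
    have hab := lemA a b ha hb
    have hcomm : (a : H) * b = b * a := by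
      have h1 : ((a*b : N) : H) ^ 2 = 1 := (hcoe2 _).mp hab
      push_cast at h1
      have hainv : (a : H)⁻¹ = a := inv_eq_of_mul_eq_one_right (by
        rw [← pow_two]; exact (hcoe2 a).mp ha)
      have hbinv : (b : H)⁻¹ = b := inv_eq_of_mul_eq_one_right (by
        rw [← pow_two]; exact (hcoe2 b).mp hb)
      have habab : ((a:H) * b) * ((a:H) * b) = 1 := by
        rw [← pow_two]; simpa [mul_assoc, pow_two] using h1
      have hinvab : ((a:H) * b)⁻¹ = (a:H) * b := inv_eq_of_mul_eq_one_right habab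
      conv_lhs => rw [← hinvab]
      rw [mul_inv_rev, hainv, hbinv]
    have := hk (a : H) b hcomm ((hcoe2 a).mp ha) ((hcoe2 b).mp hb)
    rcases this with h | h | h
    · exact absurd (Subtype.ext h) ha1
    · exact absurd (Subtype.ext h) hb1
    · exact Subtype.ext h
  -- involutions in N are central in N
  have ctors : ∀ u : N, u ^ 2 = 1 → ∀ n : N, n * u = u * n := by
    intro u hu n
    by_cases hu1 : u = 1
    · rw [hu1, mul_one, one_mul]
    · set v : N := n * u * n⁻¹ with hv
      have hv2 : v ^ 2 = 1 := by
        rw [hv, conj_pow, hu, mul_one, mul_inv_cancel]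
      have hv1 : v ≠ 1 := by
        intro hcon
        rw [hv] at hcon
        apply hu1
        have h7 := congrArg (fun x => n⁻¹ * x * n) hcon
        simpa [mul_assoc] using h7
      have h8 := uniqInvol u v hu hv2 hu1 hv1
      rw [hv] at h8
      have h9 := congrArg (fun x : N => x * n) h8
      simp only [mul_assoc, inv_mul_cancel, mul_one] at h9
      exact h9.symm
  -- z as an element of N, central, with finite-index zpowers
  set z' : N := ⟨z, hzN⟩ with hz'def
  have hz'c : z' ∈ Subgroup.center N := by
    rw [Subgroup.mem_center_iff]
    intro n
    exact Subtype.ext (by simpa using hcommz n 1)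
  have hz'pows : Subgroup.zpowers z' = (Subgroup.zpowers z).subgroupOf N := by
    ext x
    rw [Subgroup.mem_subgroupOf, Subgroup.mem_zpowers_iff, Subgroup.mem_zpowers_iff]
    constructor
    · rintro ⟨k, rfl⟩
      exact ⟨k, by simp [hz'def]⟩
    · rintro ⟨k, hxk⟩
      exact ⟨k, Subtype.ext (by simpa using hxk)⟩
  haveI : (Subgroup.zpowers z').FiniteIndex := by rw [hz'pows]; infer_instance
  haveI : (Subgroup.center N).FiniteIndex :=
    Subgroup.finiteIndex_of_le (Subgroup.zpowers_le.mpr hz'c)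
  -- the transfer homomorphism and commutativity of N
  have hNcomm : ∀ a b : N, a * b = b * a := by
    set f := MonoidHom.transferCenterPow N with hfdef
    set W := (Subgroup.zpowers z').subgroupOf (Subgroup.center N) with hWdef
    haveI : W.FiniteIndex := by rw [hWdef]; infer_instance
    haveI : IsCyclic W := by
      haveI := zpowers_isCyclic' z'
      exact isCyclic_of_surjective _
        (Subgroup.subgroupOfEquivOfLe (Subgroup.zpowers_le.mpr hz'c)).symm.surjective
    letI : CommGroup (Subgroup.center N) :=
      { (inferInstance : Group (Subgroup.center N)) with
        mul_comm := fun a b => Subtype.ext (Subgroup.mem_center_iff.mp b.2 a) }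
    set q : Subgroup.center N →* W :=
      MonoidHom.codRestrict (powMonoidHom W.index) W (fun a => W.pow_index_mem a) with hqdef
    have hker : (q.comp f).ker ≤ Subgroup.center N := by
      intro x hx
      rw [MonoidHom.mem_ker] at hx
      have h1 : ((f x : N)) ^ W.index = 1 := by
        have := congrArg (fun w : W => ((w : Subgroup.center N) : N)) hx
        simpa [hqdef, powMonoidHom] using this
      rw [MonoidHom.transferCenterPow_apply] at h1
      rw [← pow_mul] at h1
      have hx2 : x ^ 2 = 1 := by
        apply hfin2' x
        refine ⟨(Subgroup.center N).index * W.index, ?_, ?_⟩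
        · exact Nat.mul_ne_zero Subgroup.FiniteIndex.index_ne_zero Subgroup.FiniteIndex.index_ne_zero
        · exact_mod_cast congrArg (Subtype.val) h1
      rw [Subgroup.mem_center_iff]
      intro n
      exact ctors x hx2 n
    exact fun a b => (commGroupOfCyclicCenterQuotient (q.comp f) hker).mul_comm a b
  -- e is additive
  have he_mul : ∀ a b : N, e (a * b) = e a + e b := by
    intro a b
    apply hzeq
    rw [← he (a * b)]
    have hC : Commute (a : H) (b : H) := congrArg Subtype.val (hNcomm a b)
    push_cast
    rw [hC.mul_pow, he a, he b, ← zpow_add]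
  have he_zpow : ∀ (u : N) (k : ℤ), e (u ^ k) = e u * k := by
    intro u k
    apply hzeq
    rw [← he (u ^ k)]
    push_cast
    rw [← zpow_natCast ((u : H) ^ k) M, ← zpow_mul, mul_comm k (M : ℤ), zpow_mul,
      zpow_natCast, he u, ← zpow_mul]
  have he_zero : ∀ n : N, e n = 0 → n ^ 2 = 1 := by
    intro n hn
    apply hfin2' n
    exact ⟨M, hM0, by rw [he n, hn, zpow_zero]⟩
  have he_zero' : ∀ n : N, n ^ 2 = 1 → e n = 0 := by
    intro n hn
    have h1 := he_mul n n
    rw [← pow_two, hn, he_one] at h1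
    omega
  have he_z' : e z' = (M : ℤ) := by
    apply hzeq
    rw [← he z']
    simp [hz'def, zpow_natCast]
  -- the range of e is a cyclic subgroup of ℤ
  set R : AddSubgroup ℤ :=
    { carrier := Set.range e
      zero_mem' := ⟨1, he_one⟩
      add_mem' := by rintro _ _ ⟨a, rfl⟩ ⟨b, rfl⟩; exact ⟨a * b, he_mul a b⟩
      neg_mem' := by
        rintro _ ⟨a, rfl⟩
        refine ⟨a⁻¹, ?_⟩
        have := he_mul a a⁻¹
        rw [mul_inv_cancel, he_one] at this
        omega } with hRdef
  obtain ⟨d, hd⟩ := Int.subgroup_cyclic R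
  have hdR : ∀ x : ℤ, x ∈ Set.range e ↔ ∃ k : ℤ, x = k * d := by
    intro x
    have h1 : x ∈ R ↔ x ∈ AddSubgroup.closure ({d} : Set ℤ) := by rw [← hd]
    rw [show (x ∈ Set.range e) = (x ∈ R) from rfl, h1, AddSubgroup.mem_closure_singleton]
    constructor
    · rintro ⟨k, rfl⟩; exact ⟨k, by simp⟩
    · rintro ⟨k, rfl⟩; exact ⟨k, by simp⟩
  have hd0 : d ≠ 0 := by
    intro hcon
    obtain ⟨k, hkM⟩ := (hdR (M : ℤ)).mp ⟨z', he_z'⟩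
    rw [hcon, mul_zero] at hkM
    exact hM0 (by exact_mod_cast hkM)
  obtain ⟨w, hw⟩ : ∃ w : N, e w = d := by
    have : d ∈ Set.range e := by
      rw [show (d ∈ Set.range e) = (d ∈ R) from rfl, hd]
      exact AddSubgroup.mem_closure_singleton_self d
    exact this
  -- the "degree" function bfun
  have hbex : ∀ n : N, ∃ k : ℤ, e n = k * d := fun n => (hdR (e n)).mp ⟨n, rfl⟩
  set bfun : N → ℤ := fun n => Classical.choose (hbex n) with hbdef
  have hb : ∀ n : N, e n = bfun n * d := fun n => Classical.choose_spec (hbex n)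
  have hbuniq : ∀ (n : N) (k : ℤ), e n = k * d → bfun n = k := by
    intro n k hk'
    have := (hb n).symm.trans hk'
    exact mul_right_cancel₀ hd0 this
  have hb_mul : ∀ a b : N, bfun (a * b) = bfun a + bfun b := by
    intro a b
    apply hbuniq
    rw [he_mul, hb a, hb b, add_mul]
  have hb_one : bfun 1 = 0 := hbuniq 1 0 (by rw [he_one, zero_mul])
  have hb_w : bfun w = 1 := hbuniq w 1 (by rw [hw, one_mul])
  have hb_zpow_w : ∀ k : ℤ, bfun (w ^ k) = k := by
    intro k
    apply hbuniq
    rw [he_zpow, hw, mul_comm]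
  -- decomposition: n * w^(-bfun n) is torsion
  have hdec : ∀ n : N, (n * w ^ (-(bfun n))) ^ 2 = 1 := by
    intro n
    apply he_zero
    rw [he_mul, he_zpow, hw, hb n]
    ring
  -- case split on whether N is everything
  by_cases hNtop : N = ⊤
  · -- z is central in H; H is abelian
    by_cases htf : ∀ u : N, u ^ 2 = 1 → u = 1
    · -- no torsion: H ≅ ℤ
      left
      set Ψ : N →* Multiplicative ℤ :=
        { toFun := fun n => Multiplicative.ofAdd (bfun n)
          map_one' := by
            show Multiplicative.ofAdd (bfun 1) = 1
            rw [hb_one]; rfl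
          map_mul' := by
            intro a b
            show Multiplicative.ofAdd (bfun (a * b)) =
              Multiplicative.ofAdd (bfun a) * Multiplicative.ofAdd (bfun b)
            rw [hb_mul]; rfl } with hΨdef
      have hΨapp : ∀ n : N, Ψ n = Multiplicative.ofAdd (bfun n) := fun n => rfl
      have hinj : Function.Injective Ψ := by
        rw [injective_iff_map_eq_one]
        intro n hn
        rw [hΨapp, ofAdd_eq_one] at hn
        apply htf
        apply he_zero
        rw [hb n, hn, zero_mul]
      have hsurj : Function.Surjective Ψ := by
        intro m
        refine ⟨w ^ (Multiplicative.toAdd m), ?_⟩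
        rw [hΨapp, hb_zpow_w, ofAdd_toAdd]
      have eN : N ≃* H := (MulEquiv.subgroupCongr hNtop).trans Subgroup.topEquiv
      exact ⟨(eN.symm).trans (MulEquiv.ofBijective Ψ ⟨hinj, hsurj⟩)⟩
    · right; left
      push_neg at htf
      obtain ⟨t, ht2, ht1⟩ := htf
      have ht2H : t * t = 1 := by rw [← pow_two]; exact ht2
      set uf : N → N := fun n => n * w ^ (-(bfun n)) with hufdef
      have hu : ∀ n : N, uf n = 1 ∨ uf n = t := by
        intro n
        by_cases h : uf n = 1
        · exact Or.inl h
        · exact Or.inr (uniqInvol _ t (hdec n) ht2 h ht1)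
      set ε : N → ZMod 2 := fun n => if uf n = 1 then 0 else 1 with hεdef
      have hufmul : ∀ a b : N, uf (a * b) = uf a * uf b := by
        intro a b
        have hC : Commute (w ^ (-(bfun a))) b := hNcomm _ _
        have h3 := hC.mul_mul_mul_comm a (w ^ (-(bfun b)))
        show (a * b) * w ^ (-(bfun (a * b))) = (a * w ^ (-(bfun a))) * (b * w ^ (-(bfun b)))
        rw [hb_mul, neg_add, zpow_add, ← h3]
      have hε1 : ∀ n : N, uf n = 1 → ε n = 0 := fun n h => by
        show (if uf n = 1 then (0 : ZMod 2) else 1) = 0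
        rw [if_pos h]
      have hεt : ∀ n : N, uf n = t → ε n = 1 := fun n h => by
        show (if uf n = 1 then (0 : ZMod 2) else 1) = 1
        rw [if_neg (fun hc => ht1 (h.symm.trans hc))]
      have hεmul : ∀ a b : N, ε (a * b) = ε a + ε b := by
        intro a b
        have h3 := hufmul a b
        rcases hu a with ha | ha <;> rcases hu b with hbv | hbv <;> rw [ha, hbv] at h3
        · rw [one_mul] at h3
          rw [hε1 _ h3, hε1 _ ha, hε1 _ hbv]; decide
        · rw [one_mul] at h3
          rw [hεt _ h3, hε1 _ ha, hεt _ hbv]; decide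
        · rw [mul_one] at h3
          rw [hεt _ h3, hεt _ ha, hε1 _ hbv]; decide
        · rw [ht2H] at h3
          rw [hε1 _ h3, hεt _ ha, hεt _ hbv]; decide
      have huf1 : uf 1 = 1 := by
        show (1 : N) * w ^ (-(bfun 1)) = 1
        rw [hb_one]; simp
      set Ψ : N →* Multiplicative ℤ × Multiplicative (ZMod 2) :=
        { toFun := fun n => (Multiplicative.ofAdd (bfun n), Multiplicative.ofAdd (ε n))
          map_one' := by
            show (Multiplicative.ofAdd (bfun 1), Multiplicative.ofAdd (ε 1)) = 1
            rw [hb_one, hε1 1 huf1]; rfl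
          map_mul' := by
            intro a b
            show (Multiplicative.ofAdd (bfun (a * b)), Multiplicative.ofAdd (ε (a * b))) = _
            rw [hb_mul, hεmul]; rfl } with hΨdef
      have hΨapp : ∀ n : N,
          Ψ n = (Multiplicative.ofAdd (bfun n), Multiplicative.ofAdd (ε n)) := fun n => rfl
      have hinj : Function.Injective Ψ := by
        rw [injective_iff_map_eq_one]
        intro n hn
        rw [hΨapp, Prod.ext_iff] at hn
        obtain ⟨hn1, hn2⟩ := hn
        rw [show ((1 : Multiplicative ℤ × Multiplicative (ZMod 2)).1 = (1 : Multiplicative ℤ)) from rfl,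
          ofAdd_eq_one] at hn1
        rw [show ((1 : Multiplicative ℤ × Multiplicative (ZMod 2)).2 = (1 : Multiplicative (ZMod 2))) from rfl,
          ofAdd_eq_one] at hn2
        have hufn : uf n = n := by
          show n * w ^ (-(bfun n)) = n
          rw [hn1]; simp
        rcases hu n with h | h
        · rw [hufn] at h; exact h
        · exfalso
          have := hεt n h
          rw [hn2] at this
          exact absurd this.symm (by decide)
      have hsurj : Function.Surjective Ψ := by
        rintro ⟨m1, m2⟩
        set k := Multiplicative.toAdd m1 with hkdef
        set c := Multiplicative.toAdd m2 with hcdef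
        refine ⟨w ^ k * t ^ (c.val), ?_⟩
        have htv2 : (t ^ (c.val)) ^ 2 = 1 := by
          rw [← pow_mul, mul_comm, pow_mul, ht2, one_pow]
        have hbt : bfun (t ^ c.val) = 0 := hbuniq _ 0 (by rw [he_zero' _ htv2, zero_mul])
        have hbn : bfun (w ^ k * t ^ c.val) = k := by rw [hb_mul, hb_zpow_w, hbt, add_zero]
        have hufn : uf (w ^ k * t ^ c.val) = t ^ c.val := by
          show (w ^ k * t ^ c.val) * w ^ (-(bfun (w ^ k * t ^ c.val))) = t ^ c.val
          rw [hbn]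
          calc w ^ k * t ^ c.val * w ^ (-k)
              = w ^ k * (t ^ c.val * w ^ (-k)) := mul_assoc _ _ _
            _ = w ^ k * (w ^ (-k) * t ^ c.val) := by rw [hNcomm (t ^ c.val) (w ^ (-k))]
            _ = t ^ c.val := by
                rw [← mul_assoc, ← zpow_add, add_neg_cancel, zpow_zero, one_mul]
        rw [hΨapp, hbn]
        have hm1 : Multiplicative.ofAdd k = m1 := by rw [hkdef, ofAdd_toAdd]
        have hcases : c.val = 0 ∨ c.val = 1 := by
          have := ZMod.val_lt c
          omega
        rcases hcases with hc | hc
        · have hc0 : c = 0 := (ZMod.val_eq_zero c).mp hc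
          have hε0 : ε (w ^ k * t ^ c.val) = 0 := hε1 _ (by rw [hufn, hc, pow_zero])
          rw [hε0, hm1]
          have : m2 = Multiplicative.ofAdd c := (ofAdd_toAdd m2).symm
          rw [this, hc0]
        · have hc1 : c = 1 := by
            have h5 : ((c.val : ℕ) : ZMod 2) = c := by
              rw [ZMod.natCast_val, ZMod.cast_id]
            rw [← h5, hc, Nat.cast_one]
          have hεe : ε (w ^ k * t ^ c.val) = 1 := hεt _ (by rw [hufn, hc, pow_one])
          rw [hεe, hm1]
          have : m2 = Multiplicative.ofAdd c := (ofAdd_toAdd m2).symm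
          rw [this, hc1]
      have eN : N ≃* H := (MulEquiv.subgroupCongr hNtop).trans Subgroup.topEquiv
      exact ⟨(eN.symm).trans (MulEquiv.ofBijective Ψ ⟨hinj, hsurj⟩)⟩
  · right; right
    -- there is s outside N
    obtain ⟨s, hsN⟩ : ∃ s : H, s ∉ N := by
      by_contra hcon
      push_neg at hcon
      exact hNtop ((Subgroup.eq_top_iff' N).mpr hcon)
    have key : ∀ x : H, x ∉ N → x * z * x⁻¹ = z⁻¹ := by
      intro x hx
      obtain ⟨c, hc⟩ := Subgroup.mem_zpowers_iff.mp (hZn.conj_mem z (Subgroup.mem_zpowers z) x)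
      obtain ⟨c', hc'⟩ := Subgroup.mem_zpowers_iff.mp (hZn.conj_mem z (Subgroup.mem_zpowers z) x⁻¹)
      rw [inv_inv] at hc'
      have h1 : z ^ (c' * c) = z := by
        rw [zpow_mul, hc']
        have h2' : (x⁻¹ * z * x) ^ c = x⁻¹ * z ^ c * x := by
          have h3' := conj_zpow (i := c) (a := x⁻¹) (b := z)
          rwa [inv_inv] at h3'
        rw [h2', hc]
        group
      have hcc : c' * c = 1 := hzeq _ _ (by rw [h1, zpow_one])
      have hcu : c = 1 ∨ c = -1 :=
        Int.isUnit_iff.mp (IsUnit.of_mul_eq_one c' (by rw [mul_comm]; exact hcc))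
      rcases hcu with h | h
      · exfalso
        apply hx
        rw [hmemN]
        rw [h, zpow_one] at hc
        calc z * x = (x * z * x⁻¹) * x := by rw [← hc]
          _ = x * z := by group
      · rw [h, zpow_neg, zpow_one] at hc
        exact hc.symm
    have hs := key s hsN
    have hsz : s * z = z⁻¹ * s := by
      have h4 := congrArg (fun y => y * s) hs
      simpa [mul_assoc] using h4
    have hzs : z * s = s * z⁻¹ := by
      have h6 : z * (s * z) = s := by rw [hsz, ← mul_assoc, mul_inv_cancel, one_mul]
      have h7 := congrArg (fun y => y * z⁻¹) h6
      simpa [mul_assoc] using h7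
    have hszk : ∀ k : ℤ, s * z ^ k * s⁻¹ = z ^ (-k) := by
      intro k
      rw [← conj_zpow, hs, inv_zpow, ← zpow_neg]
    have hNs : ∀ n : N, s * (n : H) * s⁻¹ ∈ N := by
      intro n
      rw [hmemN]
      have hnz : z * (n : H) = (n : H) * z := (hmemN (n : H)).mp n.2
      have hnzinv : z⁻¹ * (n : H) = (n : H) * z⁻¹ :=
        ((Commute.inv_left (hnz : Commute z (n : H))).eq : _)
      have f3 : z⁻¹ * s⁻¹ = s⁻¹ * z := by
        have h8 := congrArg (fun y : H => y⁻¹) hsz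
        simpa [mul_inv_rev] using h8
      calc z * (s * (n : H) * s⁻¹)
          = (z * s) * ((n : H) * s⁻¹) := by group
        _ = (s * z⁻¹) * ((n : H) * s⁻¹) := by rw [hzs]
        _ = s * (z⁻¹ * (n : H)) * s⁻¹ := by group
        _ = s * ((n : H) * z⁻¹) * s⁻¹ := by rw [hnzinv]
        _ = (s * (n : H)) * (z⁻¹ * s⁻¹) := by group
        _ = (s * (n : H)) * (s⁻¹ * z) := by rw [f3]
        _ = s * (n : H) * s⁻¹ * z := by group
    have heσ : ∀ n : N, e ⟨s * (n : H) * s⁻¹, hNs n⟩ = - e n := by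
      intro n
      apply hzeq
      rw [← he _]
      show (s * (n : H) * s⁻¹) ^ M = z ^ (-(e n))
      rw [conj_pow, he n, hszk (e n)]
    have hs2 : s * s ∈ N := by
      rw [hmemN]
      calc z * (s * s) = (z * s) * s := by group
        _ = (s * z⁻¹) * s := by rw [hzs]
        _ = s * (z⁻¹ * s) := by group
        _ = s * (s * z) := by rw [← hsz]
        _ = s * s * z := by group
    have he_s2 : e ⟨s * s, hs2⟩ = 0 := by
      have h9 := heσ ⟨s * s, hs2⟩
      have h10 : (⟨s * (s * s) * s⁻¹, hNs ⟨s * s, hs2⟩⟩ : N) = ⟨s * s, hs2⟩ :=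
        Subtype.ext (by group)
      rw [h10] at h9
      omega
    have hss1 : s * s = 1 := by
      have h11 := he_zero _ he_s2
      have h12 : ((s * s) : H) ^ 2 = 1 := (hcoe2 _).mp h11
      have hfo : IsOfFinOrder s := by
        apply isOfFinOrder_iff_pow_eq_one.mpr
        refine ⟨4, by norm_num, ?_⟩
        calc s ^ 4 = (s * s) ^ 2 := by rw [← pow_two s, ← pow_mul]
          _ = 1 := h12
      have := h2 s hfo
      rwa [pow_two] at this
    have hsinv : s⁻¹ = s := inv_eq_of_mul_eq_one_right hss1
    -- N is torsion-free
    have htf : ∀ u : N, u ^ 2 = 1 → u = 1 := by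
      intro u hu
      by_contra hu1
      have hσu2 : (⟨s * (u : H) * s⁻¹, hNs u⟩ : N) ^ 2 = 1 := by
        apply (hcoe2 _).mpr
        show (s * (u : H) * s⁻¹) ^ 2 = 1
        rw [conj_pow, (hcoe2 u).mp hu, mul_one, mul_inv_cancel]
      have hσu1 : (⟨s * (u : H) * s⁻¹, hNs u⟩ : N) ≠ 1 := by
        intro hcon
        apply hu1
        have h13 := congrArg Subtype.val hcon
        show u = 1
        apply Subtype.ext
        show (u : H) = 1
        have h14 := congrArg (fun y => s⁻¹ * y * s) h13
        simpa [mul_assoc] using h14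
      have h15 := uniqInvol u _ hu hσu2 hu1 hσu1
      have h16 := congrArg Subtype.val h15
      have hcomm : s * (u : H) = (u : H) * s := by
        have h17 := congrArg (fun y => y * s) h16
        simp only [mul_assoc, inv_mul_cancel, mul_one] at h17
        exact h17.symm
      rcases hk s (u : H) hcomm (by rw [pow_two, hss1]) ((hcoe2 u).mp hu) with h | h | h
      · exact hsN (h ▸ N.one_mem)
      · exact hu1 (Subtype.ext h)
      · exact hsN (h ▸ u.2)
    have hgenN : ∀ n : N, n = w ^ (bfun n) := by
      intro n
      have h13 := htf _ (hdec n)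
      have h14 : n = n * w ^ (-(bfun n)) * w ^ (bfun n) := by
        rw [mul_assoc, ← zpow_add, neg_add_cancel, zpow_zero, mul_one]
      rw [h13, one_mul] at h14
      exact h14
    set ω : H := (w : H) with hω
    have hsws : s * ω * s⁻¹ = ω⁻¹ := by
      have h14 := heσ w
      have hb14 : bfun ⟨s * ω * s⁻¹, hNs w⟩ = -1 :=
        hbuniq _ (-1) (by rw [h14, hw]; ring)
      have h15 := hgenN ⟨s * ω * s⁻¹, hNs w⟩
      rw [hb14] at h15
      have h16 := congrArg Subtype.val h15
      simpa using h16
    have f5 : ∀ k : ℤ, s * ω ^ k = ω ^ (-k) * s := by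
      intro k
      have h16 : s * ω ^ k * s⁻¹ = ω ^ (-k) := by
        rw [← conj_zpow, hsws, inv_zpow, ← zpow_neg]
      have h17 := congrArg (fun y => y * s) h16
      simpa [mul_assoc] using h17
    have hωs : ∀ k : ℤ, ω ^ k * s = s * ω ^ (-k) := by
      intro k
      have h18 := f5 (-k)
      rw [neg_neg] at h18
      exact h18.symm
    have hwinj : ∀ k k' : ℤ, ω ^ k = ω ^ k' → k = k' := by
      intro k k' hkk
      have h19 : (w : N) ^ k = w ^ k' := Subtype.ext (by push_cast; exact hkk)
      have h20 := congrArg bfun h19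
      rwa [hb_zpow_w, hb_zpow_w] at h20
    have hsplit : ∀ x : H, x ∈ N ∨ s * x ∈ N := by
      intro x
      by_cases hx : x ∈ N
      · exact Or.inl hx
      · right
        rw [hmemN]
        have hxz := key x hx
        have hxz1 : x * z = z⁻¹ * x := by
          have h21 := congrArg (fun y => y * x) hxz
          simpa [mul_assoc] using h21
        calc z * (s * x) = (z * s) * x := by group
          _ = (s * z⁻¹) * x := by rw [hzs]
          _ = s * (z⁻¹ * x) := by group
          _ = s * (x * z) := by rw [← hxz1]
          _ = s * x * z := by group
    -- the dihedral isomorphism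
    set Φ : DihedralGroup 0 →* H := dihedralHom s ω hss1 hωs with hΦdef
    have hΦr : ∀ i : ZMod 0, Φ (DihedralGroup.r i) = ω ^ zmodZeroToInt i := by
      intro i
      rw [hΦdef, dihedralHom_apply, dihedralMap_r]
    have hΦsr : ∀ i : ZMod 0, Φ (DihedralGroup.sr i) = s * ω ^ zmodZeroToInt i := by
      intro i
      rw [hΦdef, dihedralHom_apply, dihedralMap_sr]
    have hinj : Function.Injective Φ := by
      rw [injective_iff_map_eq_one]
      rintro (i | i) h
      · rw [hΦr] at h
        have h23 : zmodZeroToInt i = 0 := hwinj _ 0 (by rw [zpow_zero]; exact h)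
        show DihedralGroup.r i = 1
        rw [DihedralGroup.one_def, show i = 0 from h23]
      · exfalso
        rw [hΦsr] at h
        have h24 : s = (ω ^ zmodZeroToInt i)⁻¹ := eq_inv_of_mul_eq_one_left h
        apply hsN
        rw [h24]
        exact N.inv_mem (N.zpow_mem w.2 _)
    have hsurj : Function.Surjective Φ := by
      intro x
      rcases hsplit x with hx | hx
      · refine ⟨DihedralGroup.r (zmodZeroOfInt (bfun ⟨x, hx⟩)), ?_⟩
        rw [hΦr, toInt_ofInt]
        have h25 := congrArg Subtype.val (hgenN ⟨x, hx⟩)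
        push_cast at h25
        exact h25.symm
      · refine ⟨DihedralGroup.sr (zmodZeroOfInt (bfun ⟨s * x, hx⟩)), ?_⟩
        rw [hΦsr, toInt_ofInt]
        have h25 := congrArg Subtype.val (hgenN ⟨s * x, hx⟩)
        push_cast at h25
        rw [← h25, ← mul_assoc, hss1, one_mul]
    exact ⟨(MulEquiv.ofBijective Φ ⟨hinj, hsurj⟩).symm⟩

/-- If every finite subgroup of `G` has order at most 2, then every infinite virtually cyclic
subgroup of `G` is isomorphic to `ℤ`, to `ℤ × ℤ/2ℤ`, or to the infinite dihedral group
`D_ℤ = ℤ ⋊ ℤ/2ℤ` (which is `DihedralGroup 0` in Mathlib). -/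
theorem stmt_12 {G : Type*} [Group G]
    (hfin : ∀ F : Subgroup G, Finite F → Nat.card F ≤ 2)
    (K : Subgroup G) (hinf : Infinite K) (hvc : VirtuallyCyclic K) :
    Nonempty (K ≃* Multiplicative ℤ) ∨
    Nonempty (K ≃* Multiplicative ℤ × Multiplicative (ZMod 2)) ∨
    Nonempty (K ≃* DihedralGroup 0) := by
  classical
  -- every finite-order element of G squares to 1
  have h2G : ∀ a : G, IsOfFinOrder a → a ^ 2 = 1 := by
    intro a hfo
    haveI : Finite (Subgroup.zpowers a) := (finite_zpowers.mpr hfo).to_subtype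
    have hc := hfin (Subgroup.zpowers a) inferInstance
    rw [Nat.card_zpowers] at hc
    have hpos : 0 < orderOf a := hfo.orderOf_pos
    rcases (by omega : orderOf a = 1 ∨ orderOf a = 2) with h1 | h1
    · rw [orderOf_eq_one_iff.mp h1, one_pow]
    · rw [← h1]; exact pow_orderOf_eq_one a
  -- commuting involutions coincide (or are trivial)
  have hkG : ∀ a b : G, a * b = b * a → a ^ 2 = 1 → b ^ 2 = 1 → a = 1 ∨ b = 1 ∨ a = b := by
    intro a b hcomm ha hb
    by_contra hcon
    push_neg at hcon
    obtain ⟨ha1, hb1, hab⟩ := hcon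
    have haa : a * a = 1 := by rw [← pow_two]; exact ha
    have hbb : b * b = 1 := by rw [← pow_two]; exact hb
    have e0 : b * a = a * b := hcomm.symm
    have e1 : a * (a * b) = b := by rw [← mul_assoc, haa, one_mul]
    have e2 : b * (a * b) = a := by rw [hcomm, ← mul_assoc, hbb, one_mul]
    have e3 : (a * b) * a = b := by rw [mul_assoc, ← hcomm, e1]
    have e4 : (a * b) * b = a := by rw [mul_assoc, hbb, mul_one]
    have e5 : (a * b) * (a * b) = 1 := by rw [mul_assoc, e2, haa]
    set S : Set G := insert (1 : G) (insert a (insert b {a * b})) with hSdef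
    set P : Subgroup G :=
      { carrier := S
        one_mem' := by simp [hSdef]
        mul_mem' := by
          intro x y hx hy
          simp only [hSdef, Set.mem_insert_iff, Set.mem_singleton_iff] at hx hy ⊢
          rcases hx with rfl | rfl | rfl | rfl <;> rcases hy with rfl | rfl | rfl | rfl <;>
            simp [haa, hbb, e0, e1, e2, e3, e4, e5]
        inv_mem' := by
          intro x hx
          simp only [hSdef, Set.mem_insert_iff, Set.mem_singleton_iff] at hx ⊢
          rcases hx with rfl | rfl | rfl | rfl
          · left; exact inv_one
          · right; left; exact inv_eq_of_mul_eq_one_right haa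
          · right; right; left; exact inv_eq_of_mul_eq_one_right hbb
          · right; right; right; exact inv_eq_of_mul_eq_one_right e5 } with hPdef
    have hSfin : S.Finite := by
      rw [hSdef]
      exact (Set.finite_singleton _).insert _ |>.insert _ |>.insert _
    haveI hPfin : Finite P := hSfin.to_subtype
    have hcard := hfin P hPfin
    have h1P : (1 : G) ∈ P := P.one_mem
    have haP : a ∈ P := by
      show a ∈ S
      simp [hSdef]
    have hbP : b ∈ P := by
      show b ∈ S
      simp [hSdef]
    have ha1' : (1 : G) ≠ a := fun h => ha1 h.symm
    have hb1' : (1 : G) ≠ b := fun h => hb1 h.symm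
    have h3 : ({1, a, b} : Set G).ncard = 3 := by
      rw [Set.ncard_insert_of_notMem (by simp [ha1', hb1']),
        Set.ncard_insert_of_notMem (by simp [hab]), Set.ncard_singleton]
    have hsub : ({1, a, b} : Set G) ⊆ S := by
      intro x hx
      simp only [Set.mem_insert_iff, Set.mem_singleton_iff] at hx
      simp only [hSdef, Set.mem_insert_iff, Set.mem_singleton_iff]
      tauto
    have hle := Set.ncard_le_ncard hsub hSfin
    have hPS : Nat.card P = S.ncard := by
      rw [← Nat.card_coe_set_eq]
      rfl
    omega
  -- transfer to the subgroup K
  have h2 : ∀ h : ↥K, IsOfFinOrder h → h ^ 2 = 1 := by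
    intro h hfo
    obtain ⟨n, hn0, hn1⟩ := isOfFinOrder_iff_pow_eq_one.mp hfo
    have hfoG : IsOfFinOrder ((h : G)) := isOfFinOrder_iff_pow_eq_one.mpr
      ⟨n, hn0, by exact_mod_cast congrArg Subtype.val hn1⟩
    have := h2G _ hfoG
    exact Subtype.ext (by push_cast; exact this)
  have hk : ∀ s t : ↥K, s * t = t * s → s ^ 2 = 1 → t ^ 2 = 1 → s = 1 ∨ t = 1 ∨ s = t := by
    intro s t hcomm hs ht
    have hcomm' : (s : G) * t = t * s := congrArg Subtype.val hcomm
    have hs' : (s : G) ^ 2 = 1 := by exact_mod_cast congrArg Subtype.val hs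
    have ht' : (t : G) ^ 2 = 1 := by exact_mod_cast congrArg Subtype.val ht
    rcases hkG _ _ hcomm' hs' ht' with h | h | h
    · exact Or.inl (Subtype.ext h)
    · exact Or.inr (Or.inl (Subtype.ext h))
    · exact Or.inr (Or.inr (Subtype.ext h))
  exact classify h2 hk hvc
end
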